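/- arXiv:1704.06002 — 3 statements merged into one kernel-verified Lean document; each statement's English description precedes it below -/
import Mathlib

section
/- Let G ≠ directed cycle be a strongly connected digraph with arc (u,v), and let w be a new vertex not in V(G). Form G^w by subdividing the arc (u,v): V(G^w) = V(G) ∪ {w} and E(G^w) = E(G) − (u,v) + {(u,w),(w,v)}. Then q(G) ≥ q(G^w). -/
open Matrix

/-- Adjacency matrix of a digraph given by the arc relation `E`. -/
def adjMatrix {V : Type} [Fintype V] (E : V → V → Prop) [DecidableRel E] : Matrix V V ℝ :=
  fun i j => if E i j then 1 else 0

/-- Outdegree of a vertex in the digraph `E`. -/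
def outdeg {V : Type} [Fintype V] (E : V → V → Prop) [DecidableRel E] (i : V) : ℕ :=
  (Finset.univ.filter (fun j => E i j)).card

/-- Signless Laplacian `Q = D⁺ + A` of the digraph `E`. -/
def signlessLaplacian {V : Type} [Fintype V] [DecidableEq V] (E : V → V → Prop)
    [DecidableRel E] : Matrix V V ℝ :=
  Matrix.diagonal (fun i => (outdeg E i : ℝ)) + adjMatrix E

/-- Q-index: the spectral radius of the signless Laplacian of the digraph `E`. -/
noncomputable def qIndex {V : Type} [Fintype V] [DecidableEq V] (E : V → V → Prop)
    [DecidableRel E] : ℝ :=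
  sSup ((fun z : ℂ => ‖z‖) '' spectrum ℂ ((signlessLaplacian E).map Complex.ofReal))

/-- A digraph is strongly connected if every vertex reaches every vertex by a directed path. -/
def StronglyConnected {V : Type} (E : V → V → Prop) : Prop :=
  ∀ i j : V, Relation.ReflTransGen E i j


section Aux
open Polynomial
variable {m : Type} [Fintype m] [DecidableEq m]

noncomputable def rho (M : Matrix m m ℝ) : ℝ :=
  sSup ((fun z : ℂ => ‖z‖) '' spectrum ℂ (M.map Complex.ofReal))

lemma eval_charpoly (M : Matrix m m ℂ) (μ : ℂ) :
    M.charpoly.eval μ = (μ • (1 : Matrix m m ℂ) - M).det := by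
  rw [Matrix.charpoly, ← Polynomial.coe_evalRingHom, RingHom.map_det]
  congr 1
  ext i j
  by_cases h : i = j
  · subst h; simp [Matrix.charmatrix_apply_eq, Matrix.one_apply]
  · simp [Matrix.charmatrix_apply_ne _ _ _ h, Matrix.one_apply_ne h]

lemma mem_spectrum_iff_isRoot (M : Matrix m m ℂ) (μ : ℂ) :
    μ ∈ spectrum ℂ M ↔ M.charpoly.IsRoot μ := by
  rw [spectrum.mem_iff, Matrix.isUnit_iff_isUnit_det, isUnit_iff_ne_zero, not_not,
    Polynomial.IsRoot, _root_.eval_charpoly, Algebra.algebraMap_eq_smul_one]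

lemma spectrum_nonempty' [Nonempty m] (M : Matrix m m ℂ) : (spectrum ℂ M).Nonempty := by
  obtain ⟨z, hz⟩ := Complex.exists_root (f := M.charpoly) (by
    rw [Matrix.charpoly_degree_eq_dim]
    exact_mod_cast Fintype.card_pos)
  exact ⟨z, (mem_spectrum_iff_isRoot M z).mpr hz⟩

lemma abs_spectrum_finite (M : Matrix m m ℂ) :
    ((fun z : ℂ => ‖z‖) '' spectrum ℂ M).Finite :=
  (Matrix.finite_spectrum M).image _

lemma abs_le_rho {M : Matrix m m ℝ} {μ : ℂ} (h : μ ∈ spectrum ℂ (M.map Complex.ofReal)) :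
    ‖μ‖ ≤ rho M :=
  le_csSup (abs_spectrum_finite _).bddAbove ⟨μ, h, rfl⟩

lemma rho_nonneg [Nonempty m] (M : Matrix m m ℝ) : 0 ≤ rho M := by
  obtain ⟨μ, hμ⟩ := spectrum_nonempty' (M.map Complex.ofReal)
  exact le_trans (norm_nonneg μ) (abs_le_rho hμ)

lemma exists_abs_eq_rho [Nonempty m] (M : Matrix m m ℝ) :
    ∃ μ ∈ spectrum ℂ (M.map Complex.ofReal), ‖μ‖ = rho M := by
  have h := Set.Nonempty.csSup_mem
    ((spectrum_nonempty' (M.map Complex.ofReal)).image (fun z : ℂ => ‖z‖))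
    (abs_spectrum_finite _)
  obtain ⟨μ, hμ, h2⟩ := h
  exact ⟨μ, hμ, h2⟩

lemma abs_trace_le [Nonempty m] (B : Matrix m m ℂ) :
    ‖B.trace‖ ≤ (Fintype.card m : ℝ) * sSup ((fun z : ℂ => ‖z‖) '' spectrum ℂ B) := by
  set R := sSup ((fun z : ℂ => ‖z‖) '' spectrum ℂ B) with hR
  have hroots : ∀ z ∈ B.charpoly.roots, ‖z‖ ≤ R := by
    intro z hz
    refine le_csSup (abs_spectrum_finite _).bddAbove ⟨z, ?_, rfl⟩
    exact (mem_spectrum_iff_isRoot B z).mpr (Polynomial.isRoot_of_mem_roots hz)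
  have habs : ∀ s : Multiset ℂ, ‖s.sum‖ ≤ (s.map (fun z : ℂ => ‖z‖)).sum := by
    intro s
    induction s using Multiset.induction with
    | empty => simp
    | cons a s ih =>
        rw [Multiset.sum_cons, Multiset.map_cons, Multiset.sum_cons]
        exact le_trans (norm_add_le _ _) (by linarith)
  have hR0 : 0 ≤ R := by
    obtain ⟨μ, hμ⟩ := spectrum_nonempty' B
    exact le_trans (norm_nonneg μ) (le_csSup (abs_spectrum_finite _).bddAbove ⟨μ, hμ, rfl⟩)
  have h1 : ‖B.trace‖ ≤ (B.charpoly.roots.map (fun z : ℂ => ‖z‖)).sum := by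
    rw [Matrix.trace_eq_sum_roots_charpoly]; exact habs _
  have h2 : (B.charpoly.roots.map (fun z : ℂ => ‖z‖)).sum
      ≤ (Multiset.card (B.charpoly.roots.map (fun z : ℂ => ‖z‖))) • R := by
    refine Multiset.sum_le_card_nsmul _ _ ?_
    intro x hx
    obtain ⟨z, hz, rfl⟩ := Multiset.mem_map.mp hx
    exact hroots z hz
  have h3 : Multiset.card (B.charpoly.roots.map (fun z : ℂ => ‖z‖)) ≤ Fintype.card m := by
    rw [Multiset.card_map]
    exact le_trans B.charpoly.card_roots' (le_of_eq (Matrix.charpoly_natDegree_eq_dim B))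
  calc ‖B.trace‖ ≤ _ := h1
    _ ≤ _ := h2
    _ ≤ (Fintype.card m : ℝ) * R := by
        rw [nsmul_eq_mul]
        exact mul_le_mul_of_nonneg_right (by exact_mod_cast h3) hR0

lemma rho_pow [Nonempty m] (M : Matrix m m ℝ) (k : ℕ) (hk : 0 < k) :
    sSup ((fun z : ℂ => ‖z‖) '' spectrum ℂ ((M.map Complex.ofReal) ^ k)) = rho M ^ k := by
  rw [spectrum.map_pow_of_pos _ hk]
  have himg : (fun z : ℂ => ‖z‖) '' ((· ^ k) '' spectrum ℂ (M.map Complex.ofReal))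
      = (fun r : ℝ => r ^ k) '' ((fun z : ℂ => ‖z‖) '' spectrum ℂ (M.map Complex.ofReal)) := by
    rw [← Set.image_comp, ← Set.image_comp]
    exact Set.image_congr (fun z _ => by simp [map_pow])
  rw [himg]
  refine IsGreatest.csSup_eq ⟨⟨rho M, ?_, rfl⟩, ?_⟩
  · obtain ⟨μ, hμ, h2⟩ := exists_abs_eq_rho M
    exact h2 ▸ ⟨μ, hμ, rfl⟩
  · rintro r ⟨s, ⟨μ, hμ, rfl⟩, rfl⟩
    exact pow_le_pow_left₀ (norm_nonneg μ) (abs_le_rho hμ) k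

section Entrywise
variable {M : Matrix m m ℝ}

lemma pow_nonneg_entries (hM : ∀ i j, 0 ≤ M i j) (k : ℕ) : ∀ i j, 0 ≤ (M ^ k) i j := by
  induction k with
  | zero => intro i j; by_cases h : i = j <;> simp [h, Matrix.one_apply]
  | succ k ih =>
      intro i j
      rw [pow_succ, Matrix.mul_apply]
      exact Finset.sum_nonneg fun c _ => mul_nonneg (ih i c) (hM c j)

lemma pow_entry_prod_le (hM : ∀ i j, 0 ≤ M i j) (a b : ℕ) (i k j : m) :
    (M ^ a) i k * (M ^ b) k j ≤ (M ^ (a + b)) i j := by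
  rw [pow_add, Matrix.mul_apply]
  refine Finset.single_le_sum (f := fun c => (M ^ a) i c * (M ^ b) c j) ?_ (Finset.mem_univ k)
  exact fun c _ => mul_nonneg (pow_nonneg_entries hM a i c) (pow_nonneg_entries hM b c j)

lemma pow_entry_mono (hM : ∀ i j, 0 ≤ M i j) (hd : ∀ i, 1 ≤ M i i) {a b : ℕ} (hab : a ≤ b)
    (i j : m) : (M ^ a) i j ≤ (M ^ b) i j := by
  induction b with
  | zero => simpa [Nat.le_zero.mp hab] using le_refl _
  | succ b ih =>
      rcases Nat.lt_or_ge a (b + 1) with h | h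
      · refine le_trans (ih (Nat.lt_succ_iff.mp h)) ?_
        calc (M ^ b) i j = (M ^ b) i j * 1 := (mul_one _).symm
          _ ≤ (M ^ b) i j * M j j :=
              mul_le_mul_of_nonneg_left (hd j) (pow_nonneg_entries hM b i j)
          _ ≤ (M ^ (b + 1)) i j := pow_entry_prod_le hM b 1 i j j |>.trans_eq' (by rw [pow_one])
      · have : a = b + 1 := le_antisymm hab h
        subst this; exact le_refl _

lemma exists_pow_all_one {E : m → m → Prop} (hsc : StronglyConnected E)
    (hM : ∀ i j, 0 ≤ M i j) (hd : ∀ i, 1 ≤ M i i) (hE : ∀ i j, E i j → 1 ≤ M i j) :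
    ∃ s, ∀ i j, 1 ≤ (M ^ s) i j := by
  have key : ∀ i j : m, Relation.ReflTransGen E i j → ∃ L, 1 ≤ (M ^ L) i j := by
    intro i j h
    induction h with
    | refl => exact ⟨0, by simp⟩
    | @tail b c hab hbc ih =>
        obtain ⟨L, hL⟩ := ih
        refine ⟨L + 1, ?_⟩
        have h2 := pow_entry_prod_le hM L 1 i b c
        rw [pow_one] at h2
        calc (1 : ℝ) = 1 * 1 := (one_mul 1).symm
          _ ≤ (M ^ L) i b * M b c :=
              mul_le_mul hL (hE _ _ hbc) one_pos.le (pow_nonneg_entries hM L i _)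
          _ ≤ _ := h2
  choose L hL using fun p : m × m => key p.1 p.2 (hsc p.1 p.2)
  refine ⟨Finset.univ.sup (fun p => L p), fun i j => ?_⟩
  exact le_trans (hL (i, j)) (pow_entry_mono hM hd
    (Finset.le_sup (f := fun p => L p) (Finset.mem_univ (i, j))) i j)

end Entrywise

lemma mulVec_le {A : Matrix m m ℝ} (hA : ∀ i j, 0 ≤ A i j) {y z : m → ℝ}
    (hyz : ∀ j, y j ≤ z j) (i : m) : A.mulVec y i ≤ A.mulVec z i :=
  Finset.sum_le_sum fun j _ => mul_le_mul_of_nonneg_left (hyz j) (hA i j)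

lemma subinv_pow {M : Matrix m m ℝ} (hM : ∀ i j, 0 ≤ M i j) {x : m → ℝ}
    {lam : ℝ} (h : ∀ i, lam * x i ≤ M.mulVec x i) (hlam : 0 ≤ lam) (k : ℕ) :
    ∀ i, lam ^ k * x i ≤ (M ^ k).mulVec x i := by
  induction k with
  | zero => intro i; rw [pow_zero, pow_zero, Matrix.one_mulVec, one_mul]
  | succ k ih =>
      intro i
      have hMk := pow_nonneg_entries hM k
      have key : ∀ j, (lam • x) j ≤ M.mulVec x j := fun j => h j
      calc lam ^ (k + 1) * x i = lam * (lam ^ k * x i) := by ring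
        _ ≤ lam * ((M ^ k).mulVec x i) := mul_le_mul_of_nonneg_left (ih i) hlam
        _ = (M ^ k).mulVec (lam • x) i := by rw [Matrix.mulVec_smul]; rfl
        _ ≤ (M ^ k).mulVec (M.mulVec x) i := mulVec_le hMk key i
        _ = (M ^ (k + 1)).mulVec x i := by rw [pow_succ, ← Matrix.mulVec_mulVec]

lemma map_pow_trace (M : Matrix m m ℝ) (k : ℕ) :
    ((M.map (Complex.ofReal)) ^ k).trace = ((M ^ k).trace : ℝ) := by
  have h1 : (M.map (Complex.ofReal)) ^ k = (M ^ k).map (Complex.ofReal) := by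
    have h0 : ∀ N : Matrix m m ℝ, N.map (Complex.ofReal) =
        (Complex.ofRealHom : ℝ →+* ℂ).mapMatrix N := fun N => rfl
    rw [h0, h0, ← map_pow]
  rw [h1]
  simp [Matrix.trace, Matrix.diag, Matrix.map_apply]

lemma rho_ge (M : Matrix m m ℝ) (hM : ∀ i j, 0 ≤ M i j)
    (hprim : ∃ s, ∀ i j, (1 : ℝ) ≤ (M ^ s) i j) (x : m → ℝ) (hx : ∀ i, 0 ≤ x i)
    (hx0 : x ≠ 0) {lam : ℝ} (hlam : 0 ≤ lam) (h : ∀ i, lam * x i ≤ M.mulVec x i) :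
    lam ≤ rho M := by
  have hne : Nonempty m := by
    by_contra hemp
    exact hx0 (funext fun i => absurd ⟨i⟩ hemp)
  rcases eq_or_lt_of_le hlam with rfl | hlam0
  · exact rho_nonneg M
  obtain ⟨i0, hi0⟩ : ∃ i, 0 < x i := by
    by_contra hc
    push_neg at hc
    exact hx0 (funext fun i => le_antisymm (hc i) (hx i))
  obtain ⟨s, hs⟩ := hprim
  set S : ℝ := ∑ j, x j with hS
  have hSpos : 0 < S :=
    lt_of_lt_of_le hi0 (Finset.single_le_sum (fun j _ => hx j) (Finset.mem_univ i0))
  set n : ℝ := (Fintype.card m : ℝ) with hn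
  have hnpos : (0:ℝ) < n := by
    simp only [hn]
    exact_mod_cast Fintype.card_pos (α := m)
  set c : ℝ := x i0 / (n * S) with hc
  have hcpos : 0 < c := div_pos hi0 (mul_pos hnpos hSpos)
  have key : ∀ k : ℕ, 1 ≤ k → c * lam ^ k ≤ n * rho M ^ (k + s) := by
    intro k hk1
    have h1 : lam ^ k * x i0 ≤ (M ^ k).mulVec x i0 := subinv_pow hM h hlam k i0
    obtain ⟨j0, hj0⟩ : ∃ j0, lam ^ k * x i0 / n ≤ (M ^ k) i0 j0 * x j0 := by
      by_contra hcon
      push_neg at hcon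
      have hlt : ∑ j, (M ^ k) i0 j * x j < ∑ _j : m, lam ^ k * x i0 / n :=
        Finset.sum_lt_sum_of_nonempty Finset.univ_nonempty (fun j _ => hcon j)
      rw [Finset.sum_const, Finset.card_univ, nsmul_eq_mul] at hlt
      have heqn : (Fintype.card m : ℝ) * (lam ^ k * x i0 / n) = lam ^ k * x i0 := by
        rw [← hn]; field_simp
      rw [heqn] at hlt
      have heq2 : (M ^ k).mulVec x i0 = ∑ j, (M ^ k) i0 j * x j := rfl
      rw [heq2] at h1
      linarith
    have hMk0 := pow_nonneg_entries hM k i0 j0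
    have hentry : lam ^ k * c ≤ (M ^ k) i0 j0 := by
      have hxj0S : x j0 ≤ S := Finset.single_le_sum (fun j _ => hx j) (Finset.mem_univ j0)
      have h2 : lam ^ k * x i0 / n ≤ (M ^ k) i0 j0 * S :=
        le_trans hj0 (mul_le_mul_of_nonneg_left hxj0S hMk0)
      have hceq : lam ^ k * c = (lam ^ k * x i0 / n) / S := by rw [hc]; ring
      rw [hceq, div_le_iff₀ hSpos]
      exact h2
    have htr : lam ^ k * c ≤ (M ^ (k + s)).trace := by
      have h3 : (M ^ s) j0 i0 * (M ^ k) i0 j0 ≤ (M ^ (s + k)) j0 j0 :=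
        pow_entry_prod_le hM s k j0 i0 j0
      have h4 : (1 : ℝ) ≤ (M ^ s) j0 i0 := hs j0 i0
      have h5 : lam ^ k * c ≤ (M ^ (s + k)) j0 j0 := by
        calc lam ^ k * c = 1 * (lam ^ k * c) := (one_mul _).symm
          _ ≤ (M ^ s) j0 i0 * (M ^ k) i0 j0 :=
              mul_le_mul h4 hentry (mul_nonneg (pow_nonneg hlam k) hcpos.le)
                (le_trans one_pos.le h4)
          _ ≤ _ := h3
      have h6 : (M ^ (s + k)) j0 j0 ≤ (M ^ (s + k)).trace := by
        refine Finset.single_le_sum (f := fun i => (M ^ (s + k)) i i) ?_ (Finset.mem_univ j0)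
        exact fun i _ => pow_nonneg_entries hM _ i i
      have hsk : s + k = k + s := by ring
      rw [hsk] at h5 h6
      exact le_trans h5 h6
    have h7 : ((M ^ (k + s)).trace : ℝ) ≤ n * rho M ^ (k + s) := by
      have h8 := abs_trace_le ((M.map Complex.ofReal) ^ (k + s))
      rw [rho_pow M (k + s) (by omega), map_pow_trace] at h8
      calc ((M ^ (k + s)).trace : ℝ) ≤ |((M ^ (k + s)).trace : ℝ)| := le_abs_self _
        _ = ‖(((M ^ (k + s)).trace : ℝ) : ℂ)‖ := by rw [Complex.norm_real, Real.norm_eq_abs]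
        _ ≤ n * rho M ^ (k + s) := h8
    calc c * lam ^ k = lam ^ k * c := mul_comm _ _
      _ ≤ _ := le_trans htr h7
  by_contra hcon
  push_neg at hcon
  have hrho0 : 0 ≤ rho M := rho_nonneg M
  have hr1 : rho M / lam < 1 := (div_lt_one hlam0).mpr hcon
  have hr0 : 0 ≤ rho M / lam := div_nonneg hrho0 hlam0.le
  have hlim : Filter.Tendsto (fun k : ℕ => (n * rho M ^ s) * (rho M / lam) ^ k)
      Filter.atTop (nhds 0) := by
    have h9 := tendsto_pow_atTop_nhds_zero_of_lt_one hr0 hr1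
    simpa using h9.const_mul (n * rho M ^ s)
  have hev := hlim.eventually (eventually_lt_nhds hcpos)
  obtain ⟨k, hkev, hk1⟩ := (hev.and (Filter.eventually_ge_atTop 1)).exists
  have hkey := key k hk1
  have hlampow : 0 < lam ^ k := pow_pos hlam0 k
  have hfin : c ≤ (n * rho M ^ s) * (rho M / lam) ^ k := by
    rw [div_pow, ← mul_div_assoc, le_div_iff₀ hlampow]
    calc c * lam ^ k ≤ n * rho M ^ (k + s) := hkey
      _ = n * rho M ^ s * rho M ^ k := by rw [pow_add]; ring
  linarith

lemma exists_subinvariant [Nonempty m] (M : Matrix m m ℝ) (hM : ∀ i j, 0 ≤ M i j) :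
    ∃ x : m → ℝ, (∀ i, 0 ≤ x i) ∧ x ≠ 0 ∧ ∀ i, rho M * x i ≤ M.mulVec x i := by
  obtain ⟨μ, hμ, habs⟩ := exists_abs_eq_rho M
  set B := M.map Complex.ofReal with hB
  have hμ' : μ ∈ spectrum ℂ (Matrix.toLinAlgEquiv' B) := by
    rwa [AlgEquiv.spectrum_eq]
  have heig : Module.End.HasEigenvalue (Matrix.toLinAlgEquiv' B) μ :=
    Module.End.hasEigenvalue_iff_mem_spectrum.mpr hμ'
  obtain ⟨z, hz⟩ := heig.exists_hasEigenvector
  have hzapp : B.mulVec z = μ • z := by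
    have := hz.apply_eq_smul
    rw [Matrix.toLinAlgEquiv'_apply] at this
    funext i
    exact congrFun this i
  refine ⟨fun i => ‖z i‖, fun i => norm_nonneg _, ?_, ?_⟩
  · obtain ⟨i, hi⟩ := Function.ne_iff.mp hz.right
    exact Function.ne_iff.mpr ⟨i, by simpa using hi⟩
  · intro i
    have h1 : rho M * ‖z i‖ = ‖(B.mulVec z) i‖ := by
      rw [hzapp, ← habs]
      simp [mul_comm]
    rw [h1]
    have h2 : (B.mulVec z) i = ∑ j, B i j * z j := rfl
    rw [h2]
    refine le_trans (norm_sum_le _ _) ?_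
    have h3 : ∀ j, ‖B i j * z j‖ = M i j * ‖z j‖ := by
      intro j
      rw [norm_mul]
      congr 1
      simp [hB, Matrix.map_apply, Complex.norm_real, Real.norm_eq_abs, abs_of_nonneg (hM i j)]
    rw [show M.mulVec (fun i => ‖z i‖) i
        = ∑ j, M i j * ‖z j‖ from rfl]
    exact le_of_eq (Finset.sum_congr rfl fun j _ => h3 j)

section Digraph
variable {E : m → m → Prop} [DecidableRel E]

lemma sl_apply (i j : m) : signlessLaplacian E i j
    = (if i = j then (outdeg E i : ℝ) else 0) + (if E i j then 1 else 0) := by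
  by_cases h : i = j <;>
    simp [signlessLaplacian, adjMatrix, Matrix.diagonal, Matrix.add_apply, h]

lemma sl_nonneg (i j : m) : 0 ≤ signlessLaplacian E i j := by
  rw [sl_apply]
  positivity

lemma outdeg_pos (h : ∃ j, E i j) : 1 ≤ outdeg E i := by
  obtain ⟨j, hj⟩ := h
  exact Finset.card_pos.mpr ⟨j, Finset.mem_filter.mpr ⟨Finset.mem_univ j, hj⟩⟩

lemma sl_diag_ge (h : ∀ i, ∃ j, E i j) (i : m) : 1 ≤ signlessLaplacian E i i := by
  rw [sl_apply, if_pos rfl]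
  have h1 : (1 : ℝ) ≤ (outdeg E i : ℝ) := by exact_mod_cast outdeg_pos (h i)
  have h2 : (0:ℝ) ≤ (if E i i then (1:ℝ) else 0) := by positivity
  linarith

lemma sl_arc_ge (h : ∀ i, ∃ j, E i j) {i j : m} (hij : E i j) :
    1 ≤ signlessLaplacian E i j := by
  rcases eq_or_ne i j with rfl | hne
  · exact sl_diag_ge h i
  · rw [sl_apply, if_neg hne, if_pos hij]; norm_num

lemma sl_prim (hsc : StronglyConnected E) (h : ∀ i, ∃ j, E i j) :
    ∃ s, ∀ i j, (1:ℝ) ≤ ((signlessLaplacian E) ^ s) i j :=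
  exists_pow_all_one hsc sl_nonneg (sl_diag_ge h) (fun _ _ hij => sl_arc_ge h hij)

lemma sl_mulVec (y : m → ℝ) (i : m) : (signlessLaplacian E).mulVec y i
    = (outdeg E i : ℝ) * y i + ∑ j, (if E i j then (1:ℝ) else 0) * y j := by
  rw [show (signlessLaplacian E).mulVec y i = ∑ j, signlessLaplacian E i j * y j from rfl]
  simp only [sl_apply, add_mul]
  rw [Finset.sum_add_distrib]
  congr 1
  rw [Finset.sum_eq_single i (fun j _ hj => by rw [if_neg (Ne.symm hj), zero_mul])
    (fun h => absurd (Finset.mem_univ i) h)]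
  rw [if_pos rfl]

end Digraph

theorem main_aux {V : Type} [Fintype V] [DecidableEq V]
    (G : V → V → Prop) [DecidableRel G]
    (hsc : StronglyConnected G) (hnotcycle : ∃ a, outdeg G a ≠ 1)
    (u v : V) (harc : G u v)
    (E' : Option V → Option V → Prop) [DecidableRel E']
    (hdef : ∀ a b, E' a b ↔ ((∃ i j : V, a = some i ∧ b = some j ∧ G i j ∧ ¬ (i = u ∧ j = v)) ∨
      (a = some u ∧ b = none) ∨ (a = none ∧ b = some v))) :
    rho (signlessLaplacian E') ≤ rho (signlessLaplacian G) := by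
  have hE'ss : ∀ i j : V, E' (some i) (some j) ↔ (G i j ∧ ¬ (i = u ∧ j = v)) := by
    intro i j; rw [hdef]; simp
  have hE'sn : ∀ i : V, E' (some i) none ↔ i = u := by
    intro i; rw [hdef]; simp
  have hE'ns : ∀ j : V, E' none (some j) ↔ j = v := by
    intro j; rw [hdef]; simp
  have hE'nn : ¬ E' none none := by rw [hdef]; simp
  have hGout : ∀ i, ∃ j, G i j := by
    intro i
    by_cases hall : ∀ j : V, j = i
    · refine ⟨i, ?_⟩
      rw [hall u, hall v] at harc
      exact harc
    · push_neg at hall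
      obtain ⟨j, hj⟩ := hall
      rcases (hsc i j).cases_head with heq | ⟨c, hc, _⟩
      · exact absurd heq.symm hj
      · exact ⟨c, hc⟩
  have houtdeg_some : ∀ i, outdeg E' (some i) = outdeg G i := by
    intro i
    unfold outdeg
    refine Finset.card_bij' (fun b _ => b.getD v)
      (fun j _ => if i = u ∧ j = v then none else some j) ?_ ?_ ?_ ?_
    · rintro (_ | j) hb
      · have h2 := (hE'sn i).mp (Finset.mem_filter.mp hb).2
        subst h2
        exact Finset.mem_filter.mpr ⟨Finset.mem_univ _, harc⟩
      · exact Finset.mem_filter.mpr ⟨Finset.mem_univ _,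
          ((hE'ss i j).mp (Finset.mem_filter.mp hb).2).1⟩
    · intro j hj
      have hGij := (Finset.mem_filter.mp hj).2
      by_cases hcase : i = u ∧ j = v
      · rw [if_pos hcase]
        exact Finset.mem_filter.mpr ⟨Finset.mem_univ _, (hE'sn i).mpr hcase.1⟩
      · rw [if_neg hcase]
        exact Finset.mem_filter.mpr ⟨Finset.mem_univ _, (hE'ss i j).mpr ⟨hGij, hcase⟩⟩
    · rintro (_ | j) hb
      · have h2 := (hE'sn i).mp (Finset.mem_filter.mp hb).2
        simp [h2]
      · have h2 := (hE'ss i j).mp (Finset.mem_filter.mp hb).2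
        simp [h2.2]
    · intro j hj
      by_cases hcase : i = u ∧ j = v
      · rw [if_pos hcase]; simp [hcase.2]
      · rw [if_neg hcase]; simp
  have houtdeg_none : outdeg E' none = 1 := by
    unfold outdeg
    rw [Finset.card_eq_one]
    refine ⟨some v, ?_⟩
    ext b
    simp only [Finset.mem_filter, Finset.mem_univ, true_and, Finset.mem_singleton]
    constructor
    · rintro hb
      rcases b with _ | j
      · exact absurd hb hE'nn
      · rw [(hE'ns j).mp hb]
    · rintro rfl
      exact (hE'ns v).mpr rfl
  have hE'out : ∀ a, ∃ b, E' a b := by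
    rintro (_ | i)
    · exact ⟨some v, (hE'ns v).mpr rfl⟩
    · by_cases hiu : i = u
      · exact ⟨none, (hE'sn i).mpr hiu⟩
      · obtain ⟨j, hj⟩ := hGout i
        exact ⟨some j, (hE'ss i j).mpr ⟨hj, fun hc => hiu hc.1⟩⟩
  have lift : ∀ i j : V, Relation.ReflTransGen G i j →
      Relation.ReflTransGen E' (some i) (some j) := by
    intro i j h
    induction h with
    | refl => exact Relation.ReflTransGen.refl
    | @tail b c hab hbc ih =>
        by_cases hcase : b = u ∧ c = v
        · obtain ⟨rfl, rfl⟩ := hcase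
          exact (ih.tail ((hE'sn _).mpr rfl)).tail ((hE'ns _).mpr rfl)
        · exact ih.tail ((hE'ss b c).mpr ⟨hbc, hcase⟩)
  have hsc' : StronglyConnected E' := by
    rintro (_ | i) (_ | j)
    · exact ((lift v u (hsc v u)).head ((hE'ns v).mpr rfl)).tail ((hE'sn u).mpr rfl)
    · exact (lift v j (hsc v j)).head ((hE'ns v).mpr rfl)
    · exact (lift i u (hsc i u)).tail ((hE'sn u).mpr rfl)
    · exact lift i j (hsc i j)
  obtain ⟨a, ha⟩ := hnotcycle
  have ha2 : 2 ≤ outdeg G a := by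
    have := outdeg_pos (hGout a)
    omega
  have hrho2 : (2:ℝ) ≤ rho (signlessLaplacian E') := by
    refine rho_ge _ sl_nonneg (sl_prim hsc' hE'out)
      (fun b => if b = some a then (1:ℝ) else 0) (fun b => by positivity) ?_ (by norm_num) ?_
    · intro hcon
      have := congrFun hcon (some a)
      simp at this
    · intro b
      have hmv : (signlessLaplacian E').mulVec (fun b => if b = some a then (1:ℝ) else 0) b
          = signlessLaplacian E' b (some a) := by
        rw [show (signlessLaplacian E').mulVec (fun b => if b = some a then (1:ℝ) else 0) b
          = ∑ c, signlessLaplacian E' b c * (if c = some a then (1:ℝ) else 0) from rfl]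
        rw [Finset.sum_eq_single (some a) (fun c _ hc => by rw [if_neg hc, mul_zero])
          (fun hmem => absurd (Finset.mem_univ _) hmem)]
        simp
      rw [hmv]
      by_cases hb : b = some a
      · subst hb
        rw [sl_apply]
        simp only [if_pos rfl, houtdeg_some, if_true, mul_one]
        have h1 : (2:ℝ) ≤ (outdeg G a : ℝ) := by exact_mod_cast ha2
        have h2 : (0:ℝ) ≤ (if E' (some a) (some a) then (1:ℝ) else 0) := by positivity
        linarith
      · rw [if_neg hb, mul_zero]
        exact sl_nonneg _ _
  obtain ⟨y, hy0, hyne, hysub⟩ := exists_subinvariant (signlessLaplacian E') sl_nonneg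
  set ρ' : ℝ := rho (signlessLaplacian E') with hρ'
  have hnonerow := hysub none
  rw [sl_mulVec, houtdeg_none] at hnonerow
  have hsum_none : ∑ b, (if E' none b then (1:ℝ) else 0) * y b = y (some v) := by
    rw [Fintype.sum_option]
    simp only [hE'ns, hE'nn, if_false, zero_mul, zero_add, ite_mul, one_mul]
    simp [Finset.sum_ite_eq']
  rw [hsum_none] at hnonerow
  norm_num at hnonerow
  have hvw : y none ≤ y (some v) := by
    nlinarith [hy0 none, hy0 (some v)]
  set x : V → ℝ := fun i => y (some i) with hx
  have hx0 : ∀ i, 0 ≤ x i := fun i => hy0 (some i)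
  have hxne : x ≠ 0 := by
    intro hcon
    apply hyne
    funext b
    rcases b with _ | i
    · have h1 : y (some v) = 0 := congrFun hcon v
      have h2 := hy0 none
      simp only [Pi.zero_apply]
      linarith [hvw, h1]
    · exact congrFun hcon i
  have hrows : ∀ i, ρ' * x i ≤ (signlessLaplacian G).mulVec x i := by
    intro i
    have hrow := hysub (some i)
    rw [sl_mulVec, houtdeg_some i, Fintype.sum_option] at hrow
    rw [sl_mulVec]
    by_cases hiu : i = u
    · subst hiu
      have h1 : (if E' (some i) none then (1:ℝ) else 0) = 1 := if_pos ((hE'sn i).mpr rfl)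
      rw [h1, one_mul] at hrow
      have hpt : ∀ j, (if G i j then (1:ℝ) else 0) * x j
          = (if E' (some i) (some j) then (1:ℝ) else 0) * x j
            + (if j = v then (1:ℝ) else 0) * x j := by
        intro j
        by_cases hjv : j = v
        · subst hjv
          rw [if_pos harc, if_pos rfl, if_neg (by rw [hE'ss]; tauto)]
          ring
        · rw [if_neg hjv, zero_mul, add_zero]
          congr 1
          simp only [hE'ss]
          simp [hjv]
      have hsum : ∑ j, (if G i j then (1:ℝ) else 0) * x j
          = (∑ j, (if E' (some i) (some j) then (1:ℝ) else 0) * x j) + x v := by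
        rw [Finset.sum_congr rfl (fun j _ => hpt j), Finset.sum_add_distrib]
        congr 1
        simp [Finset.sum_ite_eq', ite_mul]
      rw [hsum]
      have hxv : x v = y (some v) := rfl
      linarith [hrow, hvw]
    · have h1 : (if E' (some i) none then (1:ℝ) else 0) = 0 :=
        if_neg (fun hc => hiu ((hE'sn i).mp hc))
      rw [h1, zero_mul, zero_add] at hrow
      have hsum : ∑ j, (if G i j then (1:ℝ) else 0) * x j
          = ∑ j, (if E' (some i) (some j) then (1:ℝ) else 0) * x j := by
        refine Finset.sum_congr rfl (fun j _ => ?_)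
        congr 1
        simp only [hE'ss]
        simp [hiu]
      rw [hsum]
      exact hrow
  exact rho_ge _ sl_nonneg (sl_prim hsc hGout) x hx0 hxne (le_trans (by norm_num) hrho2) hrows

end Aux

open scoped Classical in
/-- Subdivision lemma: let `G` be a strongly connected digraph that is not a directed cycle
(equivalently, some vertex has outdegree `≠ 1`) with arc `(u,v)`, and let `G^w` (on the vertex
set `Option V`, the new vertex being `none`) be obtained by replacing the arc `(u,v)` with the
arcs `(u,w)` and `(w,v)`. Then `q(G) ≥ q(G^w)`. -/
theorem stmt8 {V : Type} [Fintype V] [DecidableEq V]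
    (G : V → V → Prop) [DecidableRel G]
    (hsc : StronglyConnected G) (hnotcycle : ∃ u, outdeg G u ≠ 1)
    (u v : V) (harc : G u v) :
    qIndex G ≥ qIndex (fun a b : Option V =>
      (∃ i j : V, a = some i ∧ b = some j ∧ G i j ∧ ¬ (i = u ∧ j = v)) ∨
      (a = some u ∧ b = none) ∨ (a = none ∧ b = some v)) := by
  exact main_aux G hsc hnotcycle u v harc _ (fun a b => Iff.rfl)
end

section
/- Let p ≥ q ≥ 1 and p+q ≤ n−1, and let B¹_{n,p,q} be obtained from the complete bipartite digraph K⃗_{p,q} (parts V_p = {v₁,…,v_p}, V_q = {v_{p+1},…,v_{p+q}}, with all arcs in both directions between parts) by adding the directed path v₁ v_{p+q+1} v_{p+q+2} ⋯ vₙ v_p. Then q(B¹_{n,p,q}) > p+q. -/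
open Matrix

/-- The digraph on `Fin n` (vertex `v_i` is index `i-1`) obtained from the complete bipartite
digraph `K⃗_{p,q}` with parts `{0,…,p-1}` and `{p,…,p+q-1}` by adding the directed path
`s, p+q, p+q+1, …, n-1, t`. Taking `(s,t)` to be `(0, p-1)`, `(p, p+q-1)`, `(0,0)`, `(p,p)`,
`(0,p)`, `(p,0)` yields `B¹`, `B²`, `B³`, `B⁴`, `B⁵`, `B⁶` respectively. -/
def Bgen (n p q s t : ℕ) : Fin n → Fin n → Prop := fun i j =>
  (i.val < p ∧ p ≤ j.val ∧ j.val < p + q) ∨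
  (j.val < p ∧ p ≤ i.val ∧ i.val < p + q) ∨
  (i.val = s ∧ j.val = p + q) ∨
  (p + q ≤ i.val ∧ j.val = i.val + 1) ∨
  (i.val = n - 1 ∧ j.val = t)

instance (n p q s t : ℕ) : DecidableRel (Bgen n p q s t) := fun i j => by
  unfold Bgen; infer_instance

/-! ### Auxiliary material for the proof -/

open Filter
open scoped NNReal ENNReal

attribute [local instance] Matrix.linftyOpNormedRing Matrix.linftyOpNormedAlgebra

section KeyAux
variable {n : ℕ}

lemma pow_entries_nonneg (M : Matrix (Fin n) (Fin n) ℝ) (hM : ∀ i j, 0 ≤ M i j) :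
    ∀ k, ∀ i j, 0 ≤ (M ^ k) i j := by
  intro k
  induction k with
  | zero => intro i j; by_cases h : i = j <;> simp [pow_zero, Matrix.one_apply, h]
  | succ k ih =>
    intro i j
    rw [pow_succ, Matrix.mul_apply]
    exact Finset.sum_nonneg fun l _ => mul_nonneg (ih i l) (hM l j)

lemma key_pow (M : Matrix (Fin n) (Fin n) ℝ) (hM : ∀ i j, 0 ≤ M i j)
    (x : Fin n → ℝ) (hx : ∀ i, 0 ≤ x i) (c : ℝ) (hc : 0 ≤ c)
    (h : ∀ i, c * x i ≤ M.mulVec x i) :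
    ∀ k, ∀ i, c ^ k * x i ≤ (M ^ k).mulVec x i := by
  intro k
  induction k with
  | zero => intro i; simp [Matrix.one_mulVec]
  | succ k ih =>
    intro i
    have h1 : (M ^ (k+1)).mulVec x = M.mulVec ((M ^ k).mulVec x) := by
      rw [pow_succ', ← Matrix.mulVec_mulVec]
    rw [h1]
    have h2 : c ^ k * (M.mulVec x i) ≤ M.mulVec ((M ^ k).mulVec x) i := by
      simp only [Matrix.mulVec, dotProduct, Finset.mul_sum]
      apply Finset.sum_le_sum
      intro j _
      rw [mul_left_comm, ← Finset.mul_sum]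
      refine mul_le_mul_of_nonneg_left ?_ (hM i j)
      simpa [Matrix.mulVec, dotProduct] using ih j
    calc c ^ (k+1) * x i = c ^ k * (c * x i) := by ring
    _ ≤ c ^ k * (M.mulVec x i) := by
          exact mul_le_mul_of_nonneg_left (h i) (pow_nonneg hc k)
    _ ≤ _ := h2

lemma linfty_nnnorm_map_ofReal (B : Matrix (Fin n) (Fin n) ℝ) :
    ‖B.map Complex.ofReal‖₊ = ‖B‖₊ := by
  simp [Matrix.linfty_opNNNorm_def, Matrix.map_apply, Complex.nnnorm_real]

theorem key_le_qIndex [NeZero n] (M : Matrix (Fin n) (Fin n) ℝ)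
    (hM : ∀ i j, 0 ≤ M i j) (x : Fin n → ℝ) (hx : ∀ i, 0 ≤ x i)
    (i0 : Fin n) (hi0 : 0 < x i0) (hmax : ∀ i, x i ≤ x i0)
    (c : ℝ) (hc : 0 ≤ c) (h : ∀ i, c * x i ≤ M.mulVec x i) :
    c ≤ sSup ((fun z : ℂ => ‖z‖) '' spectrum ℂ (M.map Complex.ofReal)) := by
  set A := M.map Complex.ofReal with hA
  have hnorm : ∀ k, c ^ k ≤ ‖A ^ k‖ := by
    intro k
    have h1 : c ^ k * x i0 ≤ (M ^ k).mulVec x i0 := key_pow M hM x hx c hc h k i0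
    have h2 : (M ^ k).mulVec x i0 ≤ (∑ j, (M ^ k) i0 j) * x i0 := by
      rw [Finset.sum_mul]
      simp only [Matrix.mulVec, dotProduct]
      apply Finset.sum_le_sum
      intro j _
      exact mul_le_mul_of_nonneg_left (hmax j) (pow_entries_nonneg M hM k i0 j)
    have h3 : (∑ j, (M ^ k) i0 j) ≤ ‖A ^ k‖ := by
      have hAk : A ^ k = (M ^ k).map Complex.ofReal := by
        have e : ∀ B : Matrix (Fin n) (Fin n) ℝ,
            B.map Complex.ofReal = Complex.ofRealHom.mapMatrix B := fun B => rfl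
        rw [hA, e, ← map_pow, ← e]
      rw [hAk]
      have h4 : ‖(M ^ k).map Complex.ofReal‖₊ = ‖M ^ k‖₊ := linfty_nnnorm_map_ofReal _
      have h5 : (∑ j, ‖(M ^ k) i0 j‖₊) ≤ ‖M ^ k‖₊ := by
        rw [Matrix.linfty_opNNNorm_def]
        exact Finset.le_sup (f := fun i => ∑ j, ‖(M ^ k) i j‖₊) (Finset.mem_univ i0)
      have h6 : (∑ j, (M ^ k) i0 j) = ((∑ j, ‖(M ^ k) i0 j‖₊ : ℝ≥0) : ℝ) := by
        push_cast
        apply Finset.sum_congr rfl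
        intro j _
        rw [Real.norm_of_nonneg (pow_entries_nonneg M hM k i0 j)]
      rw [h6]
      calc ((∑ j, ‖(M ^ k) i0 j‖₊ : ℝ≥0) : ℝ) ≤ ((‖M ^ k‖₊ : ℝ≥0) : ℝ) := by
            exact_mod_cast h5
        _ = ‖(M ^ k).map Complex.ofReal‖ := by rw [← h4]; exact coe_nnnorm _
    nlinarith [hi0]
  have hsr : ENNReal.ofReal c ≤ spectralRadius ℂ A := by
    refine le_trans ?_ (spectrum.limsup_pow_nnnorm_pow_one_div_le_spectralRadius A)
    apply Filter.le_limsup_of_frequently_le'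
    refine (Filter.eventually_atTop.2 ⟨1, fun k hk => ?_⟩).frequently
    have hk0 : (k : ℝ) ≠ 0 := by positivity
    have h1 : ENNReal.ofReal c ^ k ≤ (‖A ^ k‖₊ : ℝ≥0∞) := by
      rw [← ENNReal.ofReal_pow hc]
      calc ENNReal.ofReal (c ^ k) ≤ ENNReal.ofReal ‖A ^ k‖ :=
            ENNReal.ofReal_le_ofReal (hnorm k)
        _ = (‖A ^ k‖₊ : ℝ≥0∞) := (ofReal_norm _).trans (enorm_eq_nnnorm _)
    have h2 : (ENNReal.ofReal c ^ k) ^ (1/(k:ℝ)) ≤ (‖A ^ k‖₊ : ℝ≥0∞) ^ (1/(k:ℝ)) :=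
      ENNReal.rpow_le_rpow h1 (by positivity)
    have h3 : (ENNReal.ofReal c ^ k) ^ (1/(k:ℝ)) = ENNReal.ofReal c := by
      rw [← ENNReal.rpow_natCast, ← ENNReal.rpow_mul, mul_one_div, div_self hk0,
        ENNReal.rpow_one]
    rwa [h3] at h2
  obtain ⟨z, hz, hz2⟩ := spectrum.exists_nnnorm_eq_spectralRadius A
  rw [← hz2] at hsr
  have hcz : c ≤ ‖z‖ := by
    have h1 : c ≤ ((‖z‖₊ : ℝ≥0∞)).toReal := by
      rw [ENNReal.ofReal_le_iff_le_toReal ENNReal.coe_ne_top] at hsr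
      exact hsr
    rwa [ENNReal.coe_toReal, coe_nnnorm] at h1
  refine le_trans hcz (le_csSup ?_ ⟨z, hz, rfl⟩)
  exact ((A.finite_spectrum).image _).bddAbove

lemma sum_attachFin (s : Finset ℕ) (h : ∀ m ∈ s, m < n) (f : ℕ → ℝ) :
    ∑ j ∈ s.attachFin h, f j.val = ∑ m ∈ s, f m := by
  apply Finset.sum_bij (fun (j : Fin n) (_ : j ∈ s.attachFin h) => j.val)
  · intro a ha; exact (Finset.mem_attachFin h).1 ha
  · intro a ha b hb hab; exact Fin.val_injective hab
  · intro m hm; exact ⟨⟨m, h m hm⟩, (Finset.mem_attachFin h).2 hm, rfl⟩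
  · intro a ha; rfl

lemma sum_Ico_const (f : ℕ → ℕ) (a b v : ℕ) (hv : ∀ m, a ≤ m → m < b → f m = v) :
    ∑ m ∈ Finset.Ico a b, ((f m : ℕ) : ℝ) = ((b - a : ℕ) : ℝ) * v := by
  rw [Finset.sum_congr rfl (fun m hm => by
    rw [hv m (Finset.mem_Ico.1 hm).1 (Finset.mem_Ico.1 hm).2])]
  rw [Finset.sum_const, Nat.card_Ico, nsmul_eq_mul]

lemma sum_attachFin_const (f : ℕ → ℕ) (a b v : ℕ) (hb : ∀ m ∈ Finset.Ico a b, m < n)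
    (hv : ∀ m, a ≤ m → m < b → f m = v) :
    ∑ j ∈ (Finset.Ico a b).attachFin hb, ((f j.val : ℕ) : ℝ) = ((b - a : ℕ) : ℝ) * v := by
  rw [sum_attachFin (Finset.Ico a b) hb (fun m => ((f m : ℕ) : ℝ))]
  exact sum_Ico_const f a b v hv

lemma outdeg_ge (E : Fin n → Fin n → Prop) [DecidableRel E] (i : Fin n)
    (S : Finset (Fin n)) (hS : ∀ j ∈ S, E i j) : S.card ≤ outdeg E i :=
  Finset.card_le_card fun j hj => Finset.mem_filter.2 ⟨Finset.mem_univ _, hS j hj⟩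

lemma q_mulVec_ge (E : Fin n → Fin n → Prop) [DecidableRel E] (x : Fin n → ℝ)
    (hx : ∀ j, 0 ≤ x j) (i : Fin n) (S : Finset (Fin n)) (hS : ∀ j ∈ S, E i j)
    (d : ℕ) (hd : d ≤ outdeg E i) :
    (d : ℝ) * x i + ∑ j ∈ S, x j ≤ (signlessLaplacian E).mulVec x i := by
  unfold signlessLaplacian
  rw [Matrix.add_mulVec, Pi.add_apply]
  have h1 : ((Matrix.diagonal fun i => ((outdeg E i : ℝ))) *ᵥ x) i = (outdeg E i : ℝ) * x i := by
    simp [Matrix.mulVec, dotProduct, Matrix.diagonal_apply, ite_mul]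
  have h2 : ∑ j ∈ S, x j ≤ (adjMatrix E *ᵥ x) i := by
    have e : (adjMatrix E *ᵥ x) i = ∑ j ∈ Finset.univ.filter (fun j => E i j), x j := by
      rw [Finset.sum_filter]
      simp [Matrix.mulVec, dotProduct, adjMatrix, ite_mul]
    rw [e]
    refine Finset.sum_le_sum_of_subset_of_nonneg ?_ (fun j _ _ => hx j)
    intro j hj; exact Finset.mem_filter.2 ⟨Finset.mem_univ _, hS j hj⟩
  rw [h1]
  have h3 : (d : ℝ) * x i ≤ (outdeg E i : ℝ) * x i :=
    mul_le_mul_of_nonneg_right (by exact_mod_cast hd) (hx i)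
  linarith

lemma signlessLaplacian_nonneg {V : Type} [Fintype V] [DecidableEq V] (E : V → V → Prop)
    [DecidableRel E] : ∀ i j, 0 ≤ signlessLaplacian E i j := by
  intro i j
  unfold signlessLaplacian
  simp only [Matrix.add_apply, Matrix.diagonal_apply, adjMatrix]
  apply add_nonneg
  · split <;> simp
  · split <;> norm_num

end KeyAux

/-- Test vector for `p ≥ 2`. -/
def xv (n p q : ℕ) : ℕ → ℕ := fun m =>
  if m = 0 then q*p^2*(p+q)^(n-(p+q))
  else if m < p then q*p*(p-1)*(p+q)^(n-(p+q))
  else if m < p+q then (p^2+1)*(p-1)*(p+q)^(n-(p+q))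
  else q*p*(p-1)*(p+q)^(m-(p+q))

/-- Test vector for `p = q = 1`. -/
def yv (n : ℕ) : ℕ → ℕ := fun m =>
  if m = 0 then 2^(n-1) else if m = 1 then 2^(n-2) else 2^(m-1)

lemma xv_le (n p q m : ℕ) (hq : 1 ≤ q) (hp : 2 ≤ p) (hm : m < n) :
    xv n p q m ≤ max (q*p^2) ((p^2+1)*(p-1)) * (p+q)^(n-(p+q)) := by
  unfold xv; split_ifs with h1 h2 h3
  · exact Nat.mul_le_mul_right _ (le_max_left _ _)
  · refine le_trans (Nat.mul_le_mul_right _ ?_) (Nat.mul_le_mul_right _ (le_max_left _ _))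
    have : q*p*(p-1) ≤ q*p*p := Nat.mul_le_mul_left _ (by omega)
    calc q*p*(p-1) ≤ q*p*p := this
      _ = q*p^2 := by ring
  · exact Nat.mul_le_mul_right _ (le_max_right _ _)
  · refine le_trans ?_ (Nat.mul_le_mul_right _ (le_max_left _ _))
    have h4 : (p+q)^(m-(p+q)) ≤ (p+q)^(n-(p+q)) :=
      Nat.pow_le_pow_right (by omega) (by omega)
    calc q*p*(p-1)*(p+q)^(m-(p+q)) ≤ q*p*(p-1)*(p+q)^(n-(p+q)) :=
          Nat.mul_le_mul_left _ h4
      _ ≤ q*p*p*(p+q)^(n-(p+q)) :=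
          Nat.mul_le_mul_right _ (Nat.mul_le_mul_left _ (by omega))
      _ = q*p^2*(p+q)^(n-(p+q)) := by ring_nf

set_option maxHeartbeats 2000000 in
/-- For `p ≥ q ≥ 1` and `p + q ≤ n - 1`, the digraph `B¹_{n,p,q}` (obtained from `K⃗_{p,q}` by
adding the directed path `v₁ v_{p+q+1} ⋯ vₙ v_p`) satisfies `q(B¹_{n,p,q}) > p + q`. -/
theorem stmt9 (n p q : ℕ) (hq : 1 ≤ q) (hqp : q ≤ p) (hn : p + q + 1 ≤ n) :
    qIndex (Bgen n p q 0 (p - 1)) > (p : ℝ) + q := by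
  haveI : NeZero n := ⟨by omega⟩
  have hp1 : 1 ≤ p := le_trans hq hqp
  rw [gt_iff_lt, qIndex]
  rcases eq_or_lt_of_le hp1 with hp | hp2
  · -- p = q = 1
    obtain rfl : p = 1 := hp.symm
    obtain rfl : q = 1 := le_antisymm hqp hq
    have hn3 : 3 ≤ n := by omega
    set E := Bgen n 1 1 0 (1-1) with hE
    set x : Fin n → ℝ := fun j => ((yv n j.val : ℕ) : ℝ) with hxdef
    have hx : ∀ j, 0 ≤ x j := fun j => Nat.cast_nonneg _
    have hpow : (2:ℝ)^(n-1) = 2^(n-2) * 2 := by rw [← pow_succ]; congr 1; omega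
    have hA : (0:ℝ) ≤ 2^(n-2) := by positivity
    have e0 : yv n 0 = 2^(n-1) := rfl
    have e1 : yv n 1 = 2^(n-2) := rfl
    have e2 : yv n 2 = 2^(2-1) := rfl
    have hcoord : ∀ i, (5/2 : ℝ) * x i ≤ (signlessLaplacian E).mulVec x i := by
      intro i
      have hiv : i.val < n := i.isLt
      rcases Nat.lt_or_ge i.val 1 with hi1 | hi1
      · -- vertex 0
        have h0 : i.val = 0 := by omega
        have hb : ∀ m ∈ Finset.Ico 1 3, m < n := fun m hm => by
          have := Finset.mem_Ico.1 hm; omega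
        have hmem : ∀ j ∈ (Finset.Ico 1 3).attachFin hb, E i j := by
          intro j hj
          rw [Finset.mem_attachFin, Finset.mem_Ico] at hj
          show Bgen n 1 1 0 (1-1) i j
          simp only [Bgen]; omega
        have hcard := outdeg_ge E i _ hmem
        rw [Finset.card_attachFin, Nat.card_Ico] at hcard
        refine le_trans ?_ (q_mulVec_ge E x hx i _ hmem 2 (by omega))
        rw [hxdef]
        simp only
        rw [sum_attachFin _ hb (fun m => ((yv n m : ℕ) : ℝ))]
        rw [show Finset.Ico 1 3 = ({1, 2} : Finset ℕ) from by decide]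
        rw [Finset.sum_insert (by decide), Finset.sum_singleton]
        rw [h0, e0, e1, e2]
        push_cast
        rw [hpow]
        norm_num
        linarith
      rcases Nat.lt_or_ge i.val 2 with hi2 | hi2
      · -- vertex 1
        have h1 : i.val = 1 := by omega
        have hlt0 : 0 < n := by omega
        have hj0v : (⟨0, hlt0⟩ : Fin n).val = 0 := rfl
        have hmem : ∀ j ∈ ({⟨0, hlt0⟩} : Finset (Fin n)), E i j := by
          intro j hj
          rw [Finset.mem_singleton] at hj
          subst hj
          exact Or.inr (Or.inl ⟨Nat.zero_lt_one, by omega, by omega⟩)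
        have hcard := outdeg_ge E i _ hmem
        rw [Finset.card_singleton] at hcard
        refine le_trans ?_ (q_mulVec_ge E x hx i _ hmem 1 (by omega))
        rw [hxdef]
        simp only
        rw [Finset.sum_singleton, h1, hj0v, e0, e1]
        push_cast
        rw [hpow]
        linarith
      rcases Nat.lt_or_ge i.val (n-1) with hi3 | hi3
      · -- path vertex
        have hlt1 : i.val + 1 < n := by omega
        have hj1v : (⟨i.val + 1, hlt1⟩ : Fin n).val = i.val + 1 := rfl
        have hmem : ∀ j ∈ ({⟨i.val + 1, hlt1⟩} : Finset (Fin n)), E i j := by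
          intro j hj
          rw [Finset.mem_singleton] at hj
          subst hj
          exact Or.inr (Or.inr (Or.inr (Or.inl ⟨by omega, rfl⟩)))
        have hcard := outdeg_ge E i _ hmem
        rw [Finset.card_singleton] at hcard
        refine le_trans ?_ (q_mulVec_ge E x hx i _ hmem 1 (by omega))
        rw [hxdef]
        simp only
        rw [Finset.sum_singleton, hj1v]
        have ev1 : yv n i.val = 2^(i.val - 1) := by
          simp only [yv]; rw [if_neg (by omega), if_neg (by omega)]
        have ev2 : yv n (i.val + 1) = 2^(i.val - 1) * 2 := by
          simp only [yv]; rw [if_neg (by omega), if_neg (by omega), ← pow_succ]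
          congr 1; omega
        rw [ev1, ev2]
        push_cast
        have hB : (0:ℝ) ≤ 2^(i.val-1) := by positivity
        linarith
      · -- last vertex
        have hlast : i.val = n - 1 := by omega
        have hlt0 : 0 < n := by omega
        have hj0v : (⟨0, hlt0⟩ : Fin n).val = 0 := rfl
        have hmem : ∀ j ∈ ({⟨0, hlt0⟩} : Finset (Fin n)), E i j := by
          intro j hj
          rw [Finset.mem_singleton] at hj
          subst hj
          exact Or.inr (Or.inr (Or.inr (Or.inr ⟨by omega, rfl⟩)))
        have hcard := outdeg_ge E i _ hmem
        rw [Finset.card_singleton] at hcard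
        refine le_trans ?_ (q_mulVec_ge E x hx i _ hmem 1 (by omega))
        rw [hxdef]
        simp only
        rw [Finset.sum_singleton, hj0v, e0]
        have ev1 : yv n i.val = 2^(n-2) := by
          simp only [yv]; rw [if_neg (by omega), if_neg (by omega)]
          congr 1; omega
        rw [ev1]
        push_cast
        rw [hpow]
        linarith
    refine lt_of_lt_of_le (by norm_num : ((1:ℕ):ℝ) + ((1:ℕ):ℝ) < 5/2) ?_
    refine key_le_qIndex _ (signlessLaplacian_nonneg E) x hx ⟨0, by omega⟩ ?_ ?_ (5/2)
      (by norm_num) hcoord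
    · show (0:ℝ) < ((yv n (⟨0, by omega⟩ : Fin n).val : ℕ) : ℝ)
      have : (⟨0, by omega⟩ : Fin n).val = 0 := rfl
      rw [this, e0]
      positivity
    · intro i
      show ((yv n i.val : ℕ) : ℝ) ≤ ((yv n (⟨0, by omega⟩ : Fin n).val : ℕ) : ℝ)
      have h00 : (⟨0, by omega⟩ : Fin n).val = 0 := rfl
      rw [h00, e0]
      have : yv n i.val ≤ 2^(n-1) := by
        have hiv : i.val < n := i.isLt
        simp only [yv]
        split_ifs with u1 u2
        · exact le_refl _
        · exact Nat.pow_le_pow_right (by omega) (by omega)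
        · exact Nat.pow_le_pow_right (by omega) (by omega)
      exact_mod_cast this
  · -- 2 ≤ p
    have hp2 : 2 ≤ p := hp2
    set E := Bgen n p q 0 (p-1) with hE
    set x : Fin n → ℝ := fun j => ((xv n p q j.val : ℕ) : ℝ) with hxdef
    have hx : ∀ j, 0 ≤ x j := fun j => Nat.cast_nonneg _
    obtain ⟨P, hPdef⟩ : ∃ y : ℝ, y = (p:ℝ) := ⟨_, rfl⟩
    obtain ⟨Q, hQdef⟩ : ∃ y : ℝ, y = (q:ℝ) := ⟨_, rfl⟩
    rw [show ((p:ℝ) + (q:ℝ)) = P + Q from by rw [hPdef, hQdef]]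
    have hP2 : (2:ℝ) ≤ P := by rw [hPdef]; exact_mod_cast hp2
    have hQ1 : (1:ℝ) ≤ Q := by rw [hQdef]; exact_mod_cast hq
    have hQP : Q ≤ P := by rw [hPdef, hQdef]; exact_mod_cast hqp
    have hP0 : (0:ℝ) < P := by linarith
    have hQ0 : (0:ℝ) < Q := by linarith
    have hP40 : (0:ℝ) < P^4 := pow_pos hP0 4
    obtain ⟨ε, hεdef⟩ : ∃ y : ℝ, y = Q / P^4 := ⟨_, rfl⟩
    have hε0 : 0 < ε := by rw [hεdef]; exact div_pos hQ0 hP40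
    obtain ⟨c, hcdef⟩ : ∃ y : ℝ, y = P + Q + ε := ⟨_, rfl⟩
    have hc0 : 0 ≤ c := by rw [hcdef]; linarith
    have hPm1 : (0:ℝ) ≤ P - 1 := by linarith
    have hP3 : P ≤ P^3 := by
      nlinarith [mul_nonneg (mul_nonneg hP0.le hPm1) (by linarith : (0:ℝ) ≤ P+1)]
    have hP4 : P ≤ P^4 := by
      nlinarith [mul_nonneg (mul_nonneg (mul_nonneg hP0.le hP0.le) hP0.le) hPm1, hP3]
    have hm1 : ε * (Q*P*(P-1)) ≤ Q*(P-1) := by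
      rw [hεdef, div_mul_eq_mul_div, div_le_iff₀ hP40]
      have h1 : Q ≤ P^3 := le_trans hQP hP3
      have hK : (0:ℝ) ≤ Q*P*(P-1) := mul_nonneg (mul_nonneg hQ0.le hP0.le) hPm1
      calc Q*(Q*P*(P-1)) = (Q*P*(P-1))*Q := by ring
        _ ≤ (Q*P*(P-1))*P^3 := mul_le_mul_of_nonneg_left h1 hK
        _ = Q*(P-1)*P^4 := by ring
    have hm2 : ε * ((P^2+1)*(P-1)) ≤ Q := by
      rw [hεdef, div_mul_eq_mul_div, div_le_iff₀ hP40]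
      have h1 : (P^2+1)*(P-1) ≤ P^4 := by
        nlinarith [mul_nonneg (mul_nonneg (mul_nonneg hP0.le hP0.le) hP0.le) hPm1,
          mul_nonneg hP0.le hPm1]
      exact mul_le_mul_of_nonneg_left h1 hQ0.le
    have hm3 : ε * (Q*P^2) ≤ Q*(P-1) := by
      rw [hεdef, div_mul_eq_mul_div, div_le_iff₀ hP40]
      have h0 : (0:ℝ) ≤ P^2 - P - 1 := by nlinarith [sq_nonneg (P-1)]
      have h1 : Q ≤ (P-1)*P^2 := by nlinarith [mul_nonneg hP0.le h0]
      have hK : (0:ℝ) ≤ Q*P^2 := mul_nonneg hQ0.le (sq_nonneg P)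
      calc Q*(Q*P^2) = (Q*P^2)*Q := by ring
        _ ≤ (Q*P^2)*((P-1)*P^2) := mul_le_mul_of_nonneg_left h1 hK
        _ = Q*(P-1)*P^4 := by ring
    have hm4 : ε ≤ 1 := by
      rw [hεdef, div_le_one hP40]; exact le_trans hQP hP4
    have hcast : ((p-1:ℕ):ℝ) = P - 1 := by
      rw [Nat.cast_sub (by omega), hPdef]; norm_num
    have hW0 : (0:ℝ) < (P+Q)^(n-(p+q)) := pow_pos (by linarith) _
    have hpq0 : 0 < p + q := by omega
    have hcoord : ∀ i, c * x i ≤ (signlessLaplacian E).mulVec x i := by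
      intro i
      have hiv : i.val < n := i.isLt
      rcases Nat.lt_or_ge i.val 1 with hi1 | hi1
      · -- vertex 0
        have h0 : i.val = 0 := by omega
        have hb1 : ∀ m ∈ Finset.Ico p (p+q+1), m < n := fun m hm => by
          have := Finset.mem_Ico.1 hm; omega
        have hmem1 : ∀ j ∈ (Finset.Ico p (p+q+1)).attachFin hb1, E i j := by
          intro j hj
          rw [Finset.mem_attachFin, Finset.mem_Ico] at hj
          show Bgen n p q 0 (p-1) i j
          simp only [Bgen]; omega
        have hcard := outdeg_ge E i _ hmem1
        rw [Finset.card_attachFin, Nat.card_Ico] at hcard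
        have hb : ∀ m ∈ Finset.Ico p (p+q), m < n := fun m hm => by
          have := Finset.mem_Ico.1 hm; omega
        have hmem : ∀ j ∈ (Finset.Ico p (p+q)).attachFin hb, E i j := by
          intro j hj
          rw [Finset.mem_attachFin, Finset.mem_Ico] at hj
          show Bgen n p q 0 (p-1) i j
          simp only [Bgen]; omega
        refine le_trans ?_ (q_mulVec_ge E x hx i _ hmem (q+1) (by omega))
        rw [hxdef]
        simp only
        rw [sum_attachFin_const (xv n p q) p (p+q) ((p^2+1)*(p-1)*(p+q)^(n-(p+q))) hb
          (fun m hm1 hm2 => by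
            simp only [xv]; rw [if_neg (by omega), if_neg (by omega), if_pos (by omega)])]
        have ev : xv n p q i.val = q*p^2*(p+q)^(n-(p+q)) := by
          rw [show i.val = 0 from h0]; simp [xv]
        rw [ev, show p+q-p = q from by omega]
        rw [hcdef]
        push_cast [Nat.cast_sub (show 1 ≤ p from by omega)]
        rw [← hPdef, ← hQdef]
        nlinarith [mul_le_mul_of_nonneg_right hm3 hW0.le]
      rcases Nat.lt_or_ge i.val p with hi2 | hi2
      · -- V_p, i ≠ 0
        have hb : ∀ m ∈ Finset.Ico p (p+q), m < n := fun m hm => by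
          have := Finset.mem_Ico.1 hm; omega
        have hmem : ∀ j ∈ (Finset.Ico p (p+q)).attachFin hb, E i j := by
          intro j hj
          rw [Finset.mem_attachFin, Finset.mem_Ico] at hj
          show Bgen n p q 0 (p-1) i j
          simp only [Bgen]; omega
        have hcard := outdeg_ge E i _ hmem
        rw [Finset.card_attachFin, Nat.card_Ico] at hcard
        refine le_trans ?_ (q_mulVec_ge E x hx i _ hmem q (by omega))
        rw [hxdef]
        simp only
        rw [sum_attachFin_const (xv n p q) p (p+q) ((p^2+1)*(p-1)*(p+q)^(n-(p+q))) hb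
          (fun m hm1 hm2 => by
            simp only [xv]; rw [if_neg (by omega), if_neg (by omega), if_pos (by omega)])]
        have ev : xv n p q i.val = q*p*(p-1)*(p+q)^(n-(p+q)) := by
          simp only [xv]; rw [if_neg (by omega), if_pos (by omega)]
        rw [ev, show p+q-p = q from by omega]
        rw [hcdef]
        push_cast [Nat.cast_sub (show 1 ≤ p from by omega)]
        rw [← hPdef, ← hQdef]
        nlinarith [mul_le_mul_of_nonneg_right hm1 hW0.le]
      rcases Nat.lt_or_ge i.val (p+q) with hi3 | hi3
      · -- V_q
        have hb : ∀ m ∈ Finset.Ico 0 p, m < n := fun m hm => by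
          have := Finset.mem_Ico.1 hm; omega
        have hmem : ∀ j ∈ (Finset.Ico 0 p).attachFin hb, E i j := by
          intro j hj
          rw [Finset.mem_attachFin, Finset.mem_Ico] at hj
          show Bgen n p q 0 (p-1) i j
          simp only [Bgen]; omega
        have hcard := outdeg_ge E i _ hmem
        rw [Finset.card_attachFin, Nat.card_Ico] at hcard
        refine le_trans ?_ (q_mulVec_ge E x hx i _ hmem p (by omega))
        rw [hxdef]
        simp only
        rw [sum_attachFin _ hb (fun m => ((xv n p q m : ℕ) : ℝ))]
        rw [Finset.sum_eq_sum_Ico_succ_bot (by omega : 0 < p)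
          (fun m => ((xv n p q m : ℕ) : ℝ))]
        rw [sum_Ico_const (xv n p q) 1 p (q*p*(p-1)*(p+q)^(n-(p+q)))
          (fun m hm1 hm2 => by
            simp only [xv]; rw [if_neg (by omega), if_pos (by omega)])]
        have ev0 : xv n p q 0 = q*p^2*(p+q)^(n-(p+q)) := by
          simp [xv]
        have ev : xv n p q i.val = (p^2+1)*(p-1)*(p+q)^(n-(p+q)) := by
          simp only [xv]; rw [if_neg (by omega), if_neg (by omega), if_pos (by omega)]
        rw [ev, ev0]
        rw [hcdef]
        push_cast [Nat.cast_sub (show 1 ≤ p from by omega)]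
        rw [← hPdef, ← hQdef]
        nlinarith [mul_le_mul_of_nonneg_right hm2 hW0.le]
      rcases Nat.lt_or_ge i.val (n-1) with hi4 | hi4
      · -- path vertex
        have hlt1 : i.val + 1 < n := by omega
        have hj1v : (⟨i.val + 1, hlt1⟩ : Fin n).val = i.val + 1 := rfl
        have hmem : ∀ j ∈ ({⟨i.val + 1, hlt1⟩} : Finset (Fin n)), E i j := by
          intro j hj
          rw [Finset.mem_singleton] at hj
          subst hj
          exact Or.inr (Or.inr (Or.inr (Or.inl ⟨by omega, rfl⟩)))
        have hcard := outdeg_ge E i _ hmem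
        rw [Finset.card_singleton] at hcard
        refine le_trans ?_ (q_mulVec_ge E x hx i _ hmem 1 (by omega))
        rw [hxdef]
        simp only
        rw [Finset.sum_singleton, hj1v]
        have ev : xv n p q i.val = q*p*(p-1)*(p+q)^(i.val-(p+q)) := by
          simp only [xv]; rw [if_neg (by omega), if_neg (by omega), if_neg (by omega)]
        have ev2 : xv n p q (i.val+1) = q*p*(p-1)*((p+q)^(i.val-(p+q)) * (p+q)) := by
          simp only [xv]; rw [if_neg (by omega), if_neg (by omega), if_neg (by omega),
            ← pow_succ]
          congr 2
          omega
        rw [ev, ev2]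
        rw [hcdef]
        push_cast [Nat.cast_sub (show 1 ≤ p from by omega)]
        rw [← hPdef, ← hQdef]
        have hU0 : (0:ℝ) ≤ (P+Q)^(i.val-(p+q)) := (pow_pos (by linarith : (0:ℝ) < P+Q) _).le
        have hprod : (0:ℝ) ≤ Q*P*(P-1)*(P+Q)^(i.val-(p+q)) := by
          apply mul_nonneg
          apply mul_nonneg
          apply mul_nonneg hQ0.le hP0.le
          · linarith
          · exact hU0
        nlinarith [mul_le_mul_of_nonneg_right hm4 hprod]
      · -- last vertex
        have hlast : i.val = n - 1 := by omega
        have hltp : p - 1 < n := by omega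
        have hj0v : (⟨p-1, hltp⟩ : Fin n).val = p - 1 := rfl
        have hmem : ∀ j ∈ ({⟨p-1, hltp⟩} : Finset (Fin n)), E i j := by
          intro j hj
          rw [Finset.mem_singleton] at hj
          subst hj
          exact Or.inr (Or.inr (Or.inr (Or.inr ⟨by omega, rfl⟩)))
        have hcard := outdeg_ge E i _ hmem
        rw [Finset.card_singleton] at hcard
        refine le_trans ?_ (q_mulVec_ge E x hx i _ hmem 1 (by omega))
        rw [hxdef]
        simp only
        rw [Finset.sum_singleton, hj0v]
        have ev : xv n p q i.val = q*p*(p-1)*(p+q)^(i.val-(p+q)) := by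
          simp only [xv]; rw [if_neg (by omega), if_neg (by omega), if_neg (by omega)]
        have ev2 : xv n p q (p-1) = q*p*(p-1)*((p+q)^(i.val-(p+q)) * (p+q)) := by
          simp only [xv]; rw [if_neg (by omega), if_pos (by omega), ← pow_succ]
          congr 2
          omega
        rw [ev, ev2]
        rw [hcdef]
        push_cast [Nat.cast_sub (show 1 ≤ p from by omega)]
        rw [← hPdef, ← hQdef]
        have hU0 : (0:ℝ) ≤ (P+Q)^(i.val-(p+q)) := (pow_pos (by linarith : (0:ℝ) < P+Q) _).le
        have hprod : (0:ℝ) ≤ Q*P*(P-1)*(P+Q)^(i.val-(p+q)) := by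
          apply mul_nonneg
          apply mul_nonneg
          apply mul_nonneg hQ0.le hP0.le
          · linarith
          · exact hU0
        nlinarith [mul_le_mul_of_nonneg_right hm4 hprod]
    have hPQc : P + Q < c := by rw [hcdef]; linarith
    have hz : 0 < n := by omega
    have hzp : p < n := by omega
    have ev0 : xv n p q 0 = q*p^2*(p+q)^(n-(p+q)) := by
      simp [xv]
    have evp : xv n p q p = (p^2+1)*(p-1)*(p+q)^(n-(p+q)) := by
      simp only [xv]; rw [if_neg (by omega), if_neg (by omega), if_pos (by omega)]
    rcases le_total ((p^2+1)*(p-1)) (q*p^2) with hcmp | hcmp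
    · refine lt_of_lt_of_le hPQc ?_
      refine key_le_qIndex _ (signlessLaplacian_nonneg E) x hx ⟨0, hz⟩ ?_ ?_ c hc0 hcoord
      · show (0:ℝ) < ((xv n p q (⟨0, hz⟩ : Fin n).val : ℕ) : ℝ)
        have h00 : (⟨0, hz⟩ : Fin n).val = 0 := rfl
        rw [h00, ev0]
        have : 0 < q*p^2*(p+q)^(n-(p+q)) :=
          Nat.mul_pos (Nat.mul_pos (by omega) (pow_pos (by omega) 2)) (pow_pos (by omega) _)
        exact_mod_cast this
      · intro i
        show ((xv n p q i.val : ℕ) : ℝ) ≤ ((xv n p q (⟨0, hz⟩ : Fin n).val : ℕ) : ℝ)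
        have h00 : (⟨0, hz⟩ : Fin n).val = 0 := rfl
        rw [h00, ev0]
        have h1 := xv_le n p q i.val hq hp2 i.isLt
        rw [max_eq_left hcmp] at h1
        exact_mod_cast h1
    · refine lt_of_lt_of_le hPQc ?_
      refine key_le_qIndex _ (signlessLaplacian_nonneg E) x hx ⟨p, hzp⟩ ?_ ?_ c hc0 hcoord
      · show (0:ℝ) < ((xv n p q (⟨p, hzp⟩ : Fin n).val : ℕ) : ℝ)
        have h00 : (⟨p, hzp⟩ : Fin n).val = p := rfl
        rw [h00, evp]
        have : 0 < (p^2+1)*(p-1)*(p+q)^(n-(p+q)) :=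
          Nat.mul_pos (Nat.mul_pos (by positivity) (by omega)) (pow_pos (by omega) _)
        exact_mod_cast this
      · intro i
        show ((xv n p q i.val : ℕ) : ℝ) ≤ ((xv n p q (⟨p, hzp⟩ : Fin n).val : ℕ) : ℝ)
        have h00 : (⟨p, hzp⟩ : Fin n).val = p := rfl
        rw [h00, evp]
        have h1 := xv_le n p q i.val hq hp2 i.isLt
        rw [max_eq_right hcmp] at h1
        exact_mod_cast h1
end

section
/- Let p ≥ q ≥ 1 and p+q ≤ n−1. Then q(B¹_{n,p,q}) ≤ q(B²_{n,p,q}), with equality if and only if p = q. -/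
open Matrix

variable {n : ℕ}

/-- real eigenvalue of real matrix is in complex spectrum -/
lemma mem_spectrum_of_eigen (M : Matrix (Fin n) (Fin n) ℝ) (y : Fin n → ℝ) (r : ℝ)
    (hy : y ≠ 0) (h : M.mulVec y = r • y) :
    (r : ℂ) ∈ spectrum ℂ (M.map Complex.ofReal) := by
  rw [spectrum.mem_iff]
  intro hu
  set N : Matrix (Fin n) (Fin n) ℂ := algebraMap ℂ _ (r : ℂ) - M.map Complex.ofReal with hN
  have hker : N.mulVec (fun i => (y i : ℂ)) = 0 := by
    funext i
    simp only [hN, Matrix.sub_mulVec, Pi.sub_apply]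
    have h1 : (algebraMap ℂ (Matrix (Fin n) (Fin n) ℂ) (r : ℂ)).mulVec (fun i => (y i : ℂ)) i
        = (r : ℂ) * (y i : ℂ) := by
      rw [Matrix.algebraMap_eq_diagonal]
      simp [Matrix.mulVec_diagonal]
    have h2 : (M.map Complex.ofReal).mulVec (fun i => (y i : ℂ)) i
        = ((M.mulVec y i : ℝ) : ℂ) := by
      simp only [Matrix.mulVec, dotProduct, Matrix.map_apply]
      push_cast
      rfl
    rw [h1, h2, h, Pi.smul_apply]
    push_cast
    ring_nf
    simp [mul_comm]
  obtain ⟨u, hu'⟩ := hu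
  have : (fun i => (y i : ℂ)) = 0 := by
    have h4 : ((↑u⁻¹ : Matrix (Fin n) (Fin n) ℂ) * N : Matrix (Fin n) (Fin n) ℂ) = 1 := by
      rw [← hu']; exact u.inv_mul
    have h3 : (↑u⁻¹ : Matrix (Fin n) (Fin n) ℂ) *ᵥ (N *ᵥ fun i => (y i : ℂ)) = 0 := by
      rw [hker, Matrix.mulVec_zero]
    rwa [Matrix.mulVec_mulVec, h4, Matrix.one_mulVec] at h3
  apply hy
  funext i
  have := congrFun this i
  simpa using this

/-- all complex eigenvalues bounded by r when a positive vector satisfies M y = r y -/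
lemma abs_le_of_eigen (M : Matrix (Fin n) (Fin n) ℝ) (y : Fin n → ℝ) (r : ℝ)
    (hM : ∀ i j, 0 ≤ M i j) (hy : ∀ i, 0 < y i) (h : M.mulVec y = r • y)
    (μ : ℂ) (hμ : μ ∈ spectrum ℂ (M.map Complex.ofReal)) : ‖μ‖ ≤ r := by
  rw [spectrum.mem_iff] at hμ
  have hdet : (algebraMap ℂ (Matrix (Fin n) (Fin n) ℂ) μ - M.map Complex.ofReal).det = 0 := by
    by_contra hd
    exact hμ ((Matrix.isUnit_iff_isUnit_det _).2 (isUnit_iff_ne_zero.2 hd))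
  obtain ⟨v, hv0, hv⟩ := (Matrix.exists_mulVec_eq_zero_iff).2 hdet
  have heig : (M.map Complex.ofReal).mulVec v = μ • v := by
    funext i
    have := congrFun hv i
    simp only [Matrix.sub_mulVec, Pi.sub_apply, Pi.zero_apply, sub_eq_zero] at this
    rw [← this, Matrix.algebraMap_eq_diagonal]
    simp [Matrix.mulVec_diagonal]
  -- choose index maximizing |v i| / y i
  have hne : (Finset.univ : Finset (Fin n)).Nonempty := by
    rcases Function.ne_iff.1 hv0 with ⟨i, _⟩
    exact ⟨i, Finset.mem_univ i⟩
  obtain ⟨i, _, hi⟩ := Finset.exists_max_image Finset.univ (fun j => ‖v j‖ / y j) hne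
  have hvi : 0 < ‖v i‖ := by
    rcases Function.ne_iff.1 hv0 with ⟨k, hk⟩
    have h1 := hi k (Finset.mem_univ k)
    have h2 : 0 < ‖v k‖ / y k :=
      div_pos (by simpa [norm_pos_iff] using hk) (hy k)
    have h3 : 0 < ‖v i‖ / y i := lt_of_lt_of_le h2 h1
    have hnn := norm_nonneg (v i)
    rcases div_pos_iff.1 h3 with ⟨h', _⟩ | ⟨_, h'⟩
    · exact h'
    · linarith [hy i]
  -- key inequality
  have key : ‖μ‖ * ‖v i‖ ≤ r * ‖v i‖ := by
    have h1 : μ * v i = ∑ j, (M i j : ℂ) * v j := by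
      have := congrFun heig i
      simp only [Matrix.mulVec, dotProduct, Pi.smul_apply, smul_eq_mul,
        Matrix.map_apply] at this
      rw [← this]
    have h2 : ‖μ * v i‖ ≤ ∑ j, M i j * ‖v j‖ := by
      rw [h1]
      refine le_trans (norm_sum_le _ _) ?_
      refine Finset.sum_le_sum fun j _ => ?_
      rw [norm_mul]
      simp [Complex.norm_real, abs_of_nonneg (hM i j)]
    have h3 : ∀ j, ‖v j‖ ≤ (‖v i‖ / y i) * y j := by
      intro j
      have := hi j (Finset.mem_univ j)
      calc ‖v j‖ = (‖v j‖ / y j) * y j := by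
            rw [div_mul_cancel₀ _ (ne_of_gt (hy j))]
        _ ≤ (‖v i‖ / y i) * y j :=
            mul_le_mul_of_nonneg_right this (le_of_lt (hy j))
    have h4 : ∑ j, M i j * ‖v j‖
        ≤ (‖v i‖ / y i) * ∑ j, M i j * y j := by
      rw [Finset.mul_sum]
      refine Finset.sum_le_sum fun j _ => ?_
      calc M i j * ‖v j‖ ≤ M i j * ((‖v i‖ / y i) * y j) :=
            mul_le_mul_of_nonneg_left (h3 j) (hM i j)
        _ = (‖v i‖ / y i) * (M i j * y j) := by ring
    have h5 : ∑ j, M i j * y j = r * y i := by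
      have := congrFun h i
      simpa [Matrix.mulVec, dotProduct] using this
    calc ‖μ‖ * ‖v i‖ = ‖μ * v i‖ := (norm_mul _ _).symm
      _ ≤ ∑ j, M i j * ‖v j‖ := h2
      _ ≤ (‖v i‖ / y i) * (r * y i) := by rw [← h5]; exact h4
      _ = r * ‖v i‖ := by
            have hyne := ne_of_gt (hy i)
            field_simp
  exact le_of_mul_le_mul_right key hvi

/-- qIndex equals r when Q has positive eigenvector y with eigenvalue r ≥ 0 -/
lemma qIndex_eq_of_eigen (hn : 0 < n) (E : Fin n → Fin n → Prop) [DecidableRel E]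
    (y : Fin n → ℝ) (r : ℝ)
    (hr : 0 ≤ r) (hy : ∀ i, 0 < y i) (h : (signlessLaplacian E).mulVec y = r • y) :
    qIndex E = r := by
  have hM : ∀ i j, 0 ≤ signlessLaplacian E i j := by
    intro i j
    simp only [signlessLaplacian, Matrix.add_apply, adjMatrix, Matrix.diagonal_apply]
    split_ifs <;> positivity
  have hy0 : y ≠ 0 := by
    intro h0
    have h1 := hy ⟨0, hn⟩
    rw [congrFun h0 ⟨0, hn⟩] at h1
    exact lt_irrefl 0 h1
  have hub : ∀ x ∈ (fun z : ℂ => ‖z‖) '' spectrum ℂ ((signlessLaplacian E).map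
      Complex.ofReal), x ≤ r := by
    rintro x ⟨μ, hμ, rfl⟩
    exact abs_le_of_eigen _ y r hM hy h μ hμ
  have hmem : r ∈ (fun z : ℂ => ‖z‖) '' spectrum ℂ ((signlessLaplacian E).map
      Complex.ofReal) :=
    ⟨(r : ℂ), mem_spectrum_of_eigen _ y r hy0 h, by
      simp [Complex.norm_real, abs_of_nonneg hr]⟩
  exact le_antisymm (Real.sSup_le hub hr) (le_csSup ⟨r, fun x hx => hub x hx⟩ hmem)

/-- qIndex is invariant under relabeling of vertices -/
lemma qIndex_relabel (E₁ E₂ : Fin n → Fin n → Prop) [DecidableRel E₁] [DecidableRel E₂]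
    (σ : Fin n ≃ Fin n) (hrel : ∀ i j, E₂ i j ↔ E₁ (σ i) (σ j)) :
    qIndex E₂ = qIndex E₁ := by
  have hQ : signlessLaplacian E₂ = (signlessLaplacian E₁).submatrix σ σ := by
    funext i j
    simp only [signlessLaplacian, Matrix.add_apply, Matrix.submatrix_apply, adjMatrix]
    congr 1
    · have hcard : outdeg E₂ i = outdeg E₁ (σ i) := by
        unfold outdeg
        refine Finset.card_bij' (fun j _ => σ j) (fun j _ => σ.symm j) ?_ ?_ ?_ ?_
        · intro a ha
          simp only [Finset.mem_filter, Finset.mem_univ, true_and] at ha ⊢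
          exact (hrel i a).1 ha
        · intro a ha
          simp only [Finset.mem_filter, Finset.mem_univ, true_and] at ha ⊢
          exact (hrel i (σ.symm a)).2 (by simpa using ha)
        · intro a _; simp
        · intro a _; simp
      by_cases hij : i = j
      · subst hij; simp [Matrix.diagonal_apply, hcard]
      · have : σ i ≠ σ j := fun hc => hij (σ.injective hc)
        simp [Matrix.diagonal_apply, hij, this]
    · exact if_congr (hrel i j) rfl rfl
  have hmap : (signlessLaplacian E₂).map Complex.ofReal
      = Matrix.reindexAlgEquiv ℂ ℂ σ.symm ((signlessLaplacian E₁).map Complex.ofReal) := by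
    rw [hQ]
    funext i j
    simp [Matrix.reindexAlgEquiv_apply, Matrix.reindex_apply, Matrix.submatrix_apply,
      Matrix.map_apply]
  unfold qIndex
  rw [hmap, AlgEquiv.spectrum_eq]

set_option maxHeartbeats 2000000 in
/-- B²_{n,p,q} is isomorphic to B¹_{n,q,p} -/
lemma qIndex_B2_eq (p q : ℕ) (hp : 1 ≤ p) (hq : 1 ≤ q) (hn : p + q + 1 ≤ n) :
    qIndex (Bgen n p q p (p + q - 1)) = qIndex (Bgen n q p 0 (q - 1)) := by
  have hσval : ∀ i : Fin n, (if i.val < p then i.val + q else if i.val < p + q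
      then i.val - p else i.val) < n := by
    intro i; have := i.isLt; split_ifs <;> omega
  have hτval : ∀ i : Fin n, (if i.val < q then i.val + p else if i.val < p + q
      then i.val - q else i.val) < n := by
    intro i; have := i.isLt; split_ifs <;> omega
  set σ : Fin n ≃ Fin n :=
    { toFun := fun i => ⟨_, hσval i⟩
      invFun := fun i => ⟨_, hτval i⟩
      left_inv := by
        intro i; ext; simp only []; split_ifs <;> omega
      right_inv := by
        intro i; ext; simp only []; split_ifs <;> omega } with hσ
  refine qIndex_relabel _ _ σ ?_
  have key : ∀ i : Fin n, (i.val < p ∧ (σ i).val = i.val + q) ∨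
      (p ≤ i.val ∧ i.val < p + q ∧ (σ i).val = i.val - p) ∨
      (p + q ≤ i.val ∧ (σ i).val = i.val) := by
    intro i
    have hσi : (σ i).val = if i.val < p then i.val + q else if i.val < p + q
        then i.val - p else i.val := rfl
    rcases Nat.lt_or_ge i.val p with h1 | h1
    · left; exact ⟨h1, by rw [hσi, if_pos h1]⟩
    · rcases Nat.lt_or_ge i.val (p + q) with h2 | h2
      · right; left
        exact ⟨h1, h2, by rw [hσi, if_neg (by omega), if_pos h2]⟩
      · right; right
        exact ⟨h2, by rw [hσi, if_neg (by omega), if_neg (by omega)]⟩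
  intro i j
  have hi := key i
  have hj := key j
  have hi' := i.isLt
  have hj' := j.isLt
  have hσi' := (σ i).isLt
  have hσj' := (σ j).isLt
  unfold Bgen
  rcases hi with ⟨h1, e1⟩ | ⟨h1, h2, e1⟩ | ⟨h1, e1⟩ <;>
    rcases hj with ⟨g1, f1⟩ | ⟨g1, g2, f1⟩ | ⟨g1, f1⟩ <;> rw [e1, f1] <;> omega

/-- entry vector for the eigen construction -/
noncomputable def Yvec (a b n : ℕ) (A₀ α t T : ℝ) : ℕ → ℝ := fun k =>
  if k = 0 then A₀ else if k < a then α else if k < a + b then 1 else t ^ (n - k) * T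

lemma sum_ind_Ico (N c d : ℕ) (v : ℝ) (hd : d ≤ N) :
    ∑ k ∈ Finset.range N, (if c ≤ k ∧ k < d then v else 0) = ((d - c : ℕ) : ℝ) * v := by
  rw [← Finset.sum_filter]
  have h : (Finset.range N).filter (fun k => c ≤ k ∧ k < d) = Finset.Ico c d := by
    ext k; simp only [Finset.mem_filter, Finset.mem_range, Finset.mem_Ico]; omega
  rw [h, Finset.sum_const, Nat.card_Ico, nsmul_eq_mul]

lemma sum_ind_Ico_nat (N c d : ℕ) (hd : d ≤ N) :
    ∑ k ∈ Finset.range N, (if c ≤ k ∧ k < d then 1 else 0) = d - c := by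
  rw [← Finset.sum_filter]
  have h : (Finset.range N).filter (fun k => c ≤ k ∧ k < d) = Finset.Ico c d := by
    ext k; simp only [Finset.mem_filter, Finset.mem_range, Finset.mem_Ico]; omega
  rw [h, Finset.sum_const, Nat.card_Ico, smul_eq_mul, mul_one]

lemma sum_ind_single (N v : ℕ) (w : ℝ) (hv : v < N) :
    ∑ k ∈ Finset.range N, (if k = v then w else 0) = w := by
  rw [Finset.sum_ite_eq' (Finset.range N) v (fun _ => w)]
  simp [hv]

lemma sum_ind_single_nat (N v : ℕ) (hv : v < N) :
    ∑ k ∈ Finset.range N, (if k = v then 1 else 0) = 1 := by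
  rw [Finset.sum_ite_eq' (Finset.range N) v (fun _ => 1)]
  simp [hv]

lemma mulVec_signless (E : Fin n → Fin n → Prop) [DecidableRel E] (y : Fin n → ℝ) (i : Fin n) :
    (signlessLaplacian E).mulVec y i
      = (outdeg E i : ℝ) * y i + ∑ j, (if E i j then y j else 0) := by
  simp only [signlessLaplacian, Matrix.add_mulVec, Pi.add_apply, Matrix.mulVec_diagonal]
  congr 1
  simp only [Matrix.mulVec, dotProduct, adjMatrix, ite_mul, one_mul, zero_mul]


/-- Master lemma: explicit positive eigenvector for B¹-type digraph `Bgen n a b 0 (a-1)`,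
whenever `r > a + b` satisfies the characteristic equation. -/
lemma qIndex_B1_eq (a b : ℕ) (ha : 1 ≤ a) (hb : 1 ≤ b) (hn : a + b + 1 ≤ n) (r : ℝ)
    (hr : (a : ℝ) + b < r) (T : ℝ)
    (hT : T = if a = 1 then (r - a) - ((a : ℝ) - 1) * ((b : ℝ) / (r - b))
      else (b : ℝ) / (r - b))
    (hroot : (r - b - 1) * ((r - a) - ((a : ℝ) - 1) * ((b : ℝ) / (r - b))) - b
      - ((r - 1)⁻¹) ^ (n - a - b) * T = 0) :
    qIndex (Bgen n a b 0 (a - 1)) = r := by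
  have hb1 : (1 : ℝ) ≤ (b : ℝ) := by exact_mod_cast hb
  have ha1 : (1 : ℝ) ≤ (a : ℝ) := by exact_mod_cast ha
  have hrb : (0 : ℝ) < r - b := by linarith
  have hr1 : (1 : ℝ) < r - 1 := by linarith
  have hr1' : (0 : ℝ) < r - 1 := by linarith
  set t : ℝ := (r - 1)⁻¹ with htdef
  have ht0 : 0 < t := inv_pos.2 hr1'
  have ht : t * (r - 1) = 1 := inv_mul_cancel₀ (ne_of_gt hr1')
  set α : ℝ := (b : ℝ) / (r - b) with hαdef
  have hα0 : 0 < α := div_pos (by linarith) hrb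
  set A₀ : ℝ := (r - a) - ((a : ℝ) - 1) * α with hA₀def
  have hA₀0 : 0 < A₀ := by
    have h1 : ((a : ℝ) - 1) * α * (r - b) = ((a : ℝ) - 1) * b := by
      rw [hαdef]; field_simp
    have h2 : ((a : ℝ) - 1) * (b : ℝ) < (r - a) * (r - b) := by nlinarith
    rw [hA₀def]
    nlinarith [hrb]
  have hT0 : 0 < T := by
    rw [hT]; split_ifs
    · exact hA₀0
    · exact hα0
  set m : ℕ := n - a - b with hmdef
  set Y : ℕ → ℝ := Yvec a b n A₀ α t T with hYdef
  have hYval : ∀ k, Y k = if k = 0 then A₀ else if k < a then α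
      else if k < a + b then 1 else t ^ (n - k) * T := fun k => rfl
  set y : Fin n → ℝ := fun i => Y i.val with hydef
  have hypos : ∀ i : Fin n, 0 < y i := by
    intro i
    rw [hydef]
    simp only [hYval]
    split_ifs
    · exact hA₀0
    · exact hα0
    · norm_num
    · positivity
  set E := Bgen n a b 0 (a - 1) with hEdef
  have heig : (signlessLaplacian E).mulVec y = r • y := by
    funext i
    rw [mulVec_signless, Pi.smul_apply, smul_eq_mul]
    have hi := i.isLt
    have hcase : i.val = 0 ∨ (0 < i.val ∧ i.val < a) ∨ (a ≤ i.val ∧ i.val < a + b)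
        ∨ (a + b ≤ i.val ∧ i.val < n - 1) ∨ i.val = n - 1 := by omega
    rcases hcase with h0 | ⟨h1, h2⟩ | ⟨h1, h2⟩ | ⟨h1, h2⟩ | h0
    · -- row 0
      have hE : ∀ j : Fin n, E i j ↔ ((a ≤ j.val ∧ j.val < a + b) ∨ j.val = a + b) := by
        intro j; have hj := j.isLt; rw [hEdef]; unfold Bgen; omega
      have hdeg : outdeg E i = b + 1 := by
        unfold outdeg
        rw [Finset.card_filter]
        calc ∑ j : Fin n, (if E i j then 1 else 0)
            = ∑ j : Fin n, (if (a ≤ j.val ∧ j.val < a + b) ∨ j.val = a + b then 1 else 0) := by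
              refine Finset.sum_congr rfl fun j _ => if_congr (hE j) rfl rfl
          _ = ∑ k ∈ Finset.range n, (if (a ≤ k ∧ k < a + b) ∨ k = a + b then 1 else 0) :=
              Fin.sum_univ_eq_sum_range (fun k => if (a ≤ k ∧ k < a + b) ∨ k = a + b
                then 1 else 0) n
          _ = ∑ k ∈ Finset.range n, ((if a ≤ k ∧ k < a + b then 1 else 0)
                + (if k = a + b then 1 else 0)) := by
              refine Finset.sum_congr rfl fun k _ => ?_
              by_cases hk1 : a ≤ k ∧ k < a + b
              · rw [if_pos (Or.inl hk1), if_pos hk1, if_neg (by omega)]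
              · by_cases hk2 : k = a + b
                · rw [if_pos (Or.inr hk2), if_neg hk1, if_pos hk2]
                · rw [if_neg (by tauto), if_neg hk1, if_neg hk2]
          _ = b + 1 := by
              rw [Finset.sum_add_distrib, sum_ind_Ico_nat n a (a + b) (by omega),
                sum_ind_single_nat n (a + b) (by omega)]
              omega
      have hsum : ∑ j, (if E i j then y j else 0) = (b : ℝ) + t ^ m * T := by
        calc ∑ j : Fin n, (if E i j then y j else 0)
            = ∑ j : Fin n, (if (a ≤ j.val ∧ j.val < a + b) ∨ j.val = a + b
                then Y j.val else 0) := by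
              refine Finset.sum_congr rfl fun j _ => if_congr (hE j) rfl rfl
          _ = ∑ k ∈ Finset.range n, (if (a ≤ k ∧ k < a + b) ∨ k = a + b then Y k else 0) :=
              Fin.sum_univ_eq_sum_range (fun k => if (a ≤ k ∧ k < a + b) ∨ k = a + b
                then Y k else 0) n
          _ = ∑ k ∈ Finset.range n, ((if a ≤ k ∧ k < a + b then (1:ℝ) else 0)
                + (if k = a + b then t ^ m * T else 0)) := by
              refine Finset.sum_congr rfl fun k _ => ?_
              by_cases hk1 : a ≤ k ∧ k < a + b
              · rw [if_pos (Or.inl hk1), if_pos hk1, if_neg (by omega), hYval,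
                  if_neg (by omega), if_neg (by omega), if_pos (by omega), add_zero]
              · by_cases hk2 : k = a + b
                · rw [if_pos (Or.inr hk2), if_neg hk1, if_pos hk2, hYval,
                    if_neg (by omega), if_neg (by omega), if_neg (by omega), hk2, zero_add,
                    hmdef]
                  congr 2
                  omega
                · rw [if_neg (by tauto), if_neg hk1, if_neg hk2, add_zero]
          _ = (b : ℝ) + t ^ m * T := by
              rw [Finset.sum_add_distrib, sum_ind_Ico (n) a (a + b) 1 (by omega),
                sum_ind_single n (a + b) (t ^ m * T) (by omega)]
              have : ((a + b - a : ℕ) : ℝ) = (b : ℝ) := by norm_cast; omega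
              rw [this, mul_one]
      have hyi : y i = A₀ := by rw [hydef]; simp only [hYval, h0, if_pos]
      rw [hdeg, hsum, hyi]
      push_cast
      linarith [hroot]
    · -- middle V_a row
      have hE : ∀ j : Fin n, E i j ↔ (a ≤ j.val ∧ j.val < a + b) := by
        intro j; have hj := j.isLt; rw [hEdef]; unfold Bgen; omega
      have hdeg : outdeg E i = b := by
        unfold outdeg
        rw [Finset.card_filter]
        calc ∑ j : Fin n, (if E i j then 1 else 0)
            = ∑ j : Fin n, (if a ≤ j.val ∧ j.val < a + b then 1 else 0) := by
              refine Finset.sum_congr rfl fun j _ => if_congr (hE j) rfl rfl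
          _ = ∑ k ∈ Finset.range n, (if a ≤ k ∧ k < a + b then 1 else 0) :=
              Fin.sum_univ_eq_sum_range (fun k => if a ≤ k ∧ k < a + b then 1 else 0) n
          _ = b := by rw [sum_ind_Ico_nat n a (a + b) (by omega)]; omega
      have hsum : ∑ j, (if E i j then y j else 0) = (b : ℝ) := by
        calc ∑ j : Fin n, (if E i j then y j else 0)
            = ∑ j : Fin n, (if a ≤ j.val ∧ j.val < a + b then Y j.val else 0) := by
              refine Finset.sum_congr rfl fun j _ => if_congr (hE j) rfl rfl
          _ = ∑ k ∈ Finset.range n, (if a ≤ k ∧ k < a + b then Y k else 0) :=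
              Fin.sum_univ_eq_sum_range (fun k => if a ≤ k ∧ k < a + b then Y k else 0) n
          _ = ∑ k ∈ Finset.range n, (if a ≤ k ∧ k < a + b then (1:ℝ) else 0) := by
              refine Finset.sum_congr rfl fun k _ => ?_
              by_cases hk : a ≤ k ∧ k < a + b
              · rw [if_pos hk, if_pos hk, hYval, if_neg (by omega), if_neg (by omega),
                  if_pos (by omega)]
              · rw [if_neg hk, if_neg hk]
          _ = (b : ℝ) := by
              rw [sum_ind_Ico n a (a + b) 1 (by omega)]
              have : ((a + b - a : ℕ) : ℝ) = (b : ℝ) := by norm_cast; omega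
              rw [this, mul_one]
      have hyi : y i = α := by
        rw [hydef]; simp only [hYval]
        rw [if_neg (by omega), if_pos h2]
      rw [hdeg, hsum, hyi, hαdef]
      field_simp
      ring
    · -- V_b row
      have hE : ∀ j : Fin n, E i j ↔ j.val < a := by
        intro j; have hj := j.isLt; rw [hEdef]; unfold Bgen; omega
      have hdeg : outdeg E i = a := by
        unfold outdeg
        rw [Finset.card_filter]
        calc ∑ j : Fin n, (if E i j then 1 else 0)
            = ∑ j : Fin n, (if 0 ≤ j.val ∧ j.val < a then 1 else 0) := by
              refine Finset.sum_congr rfl fun j _ => if_congr (by rw [hE j]; omega) rfl rfl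
          _ = ∑ k ∈ Finset.range n, (if 0 ≤ k ∧ k < a then 1 else 0) :=
              Fin.sum_univ_eq_sum_range (fun k => if 0 ≤ k ∧ k < a then 1 else 0) n
          _ = a := by rw [sum_ind_Ico_nat n 0 a (by omega)]; omega
      have hsum : ∑ j, (if E i j then y j else 0) = A₀ + ((a : ℝ) - 1) * α := by
        calc ∑ j : Fin n, (if E i j then y j else 0)
            = ∑ j : Fin n, (if j.val < a then Y j.val else 0) := by
              refine Finset.sum_congr rfl fun j _ => if_congr (hE j) rfl rfl
          _ = ∑ k ∈ Finset.range n, (if k < a then Y k else 0) :=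
              Fin.sum_univ_eq_sum_range (fun k => if k < a then Y k else 0) n
          _ = ∑ k ∈ Finset.range n, ((if k = 0 then A₀ else 0)
                + (if 1 ≤ k ∧ k < a then α else 0)) := by
              refine Finset.sum_congr rfl fun k _ => ?_
              by_cases hk0 : k = 0
              · rw [if_pos (by omega), if_pos hk0, if_neg (by omega), hYval, if_pos hk0,
                  add_zero]
              · by_cases hka : k < a
                · rw [if_pos hka, if_neg hk0, if_pos (by omega), hYval, if_neg hk0,
                    if_pos hka, zero_add]
                · rw [if_neg hka, if_neg hk0, if_neg (by omega), add_zero]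
          _ = A₀ + ((a : ℝ) - 1) * α := by
              rw [Finset.sum_add_distrib, sum_ind_single n 0 A₀ (by omega),
                sum_ind_Ico n 1 a α (by omega)]
              have : ((a - 1 : ℕ) : ℝ) = (a : ℝ) - 1 := by
                have : (1:ℕ) ≤ a := ha
                push_cast [Nat.cast_sub this]
                ring
              rw [this]
      have hyi : y i = 1 := by
        rw [hydef]; simp only [hYval]
        rw [if_neg (by omega), if_neg (by omega), if_pos h2]
      rw [hdeg, hsum, hyi, hA₀def]
      push_cast
      ring
    · -- path interior row
      have hE : ∀ j : Fin n, E i j ↔ j.val = i.val + 1 := by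
        intro j; have hj := j.isLt; rw [hEdef]; unfold Bgen; omega
      have hdeg : outdeg E i = 1 := by
        unfold outdeg
        rw [Finset.card_filter]
        calc ∑ j : Fin n, (if E i j then 1 else 0)
            = ∑ j : Fin n, (if j.val = i.val + 1 then 1 else 0) := by
              refine Finset.sum_congr rfl fun j _ => if_congr (hE j) rfl rfl
          _ = ∑ k ∈ Finset.range n, (if k = i.val + 1 then 1 else 0) :=
              Fin.sum_univ_eq_sum_range (fun k => if k = i.val + 1 then 1 else 0) n
          _ = 1 := sum_ind_single_nat n (i.val + 1) (by omega)
      have hsum : ∑ j, (if E i j then y j else 0) = t ^ (n - i.val - 1) * T := by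
        calc ∑ j : Fin n, (if E i j then y j else 0)
            = ∑ j : Fin n, (if j.val = i.val + 1 then Y j.val else 0) := by
              refine Finset.sum_congr rfl fun j _ => if_congr (hE j) rfl rfl
          _ = ∑ k ∈ Finset.range n, (if k = i.val + 1 then Y k else 0) := by
              refine Fin.sum_univ_eq_sum_range (fun k => if k = i.val + 1 then Y k else 0) n
          _ = ∑ k ∈ Finset.range n, (if k = i.val + 1 then t ^ (n - i.val - 1) * T
                else 0) := by
              refine Finset.sum_congr rfl fun k _ => ?_
              by_cases hk : k = i.val + 1
              · rw [if_pos hk, if_pos hk, hYval, if_neg (by omega), if_neg (by omega),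
                  if_neg (by omega), hk, Nat.sub_sub]
              · rw [if_neg hk, if_neg hk]
          _ = t ^ (n - i.val - 1) * T := sum_ind_single n (i.val + 1) _ (by omega)
      have hyi : y i = t ^ (n - i.val) * T := by
        rw [hydef]; simp only [hYval]
        rw [if_neg (by omega), if_neg (by omega), if_neg (by omega)]
      have hpow : t ^ (n - i.val) = t ^ (n - i.val - 1) * t := by
        rw [← pow_succ]
        congr 1
        omega
      rw [hdeg, hsum, hyi, hpow]
      push_cast
      linear_combination (-(t ^ (n - i.val - 1) * T)) * ht
    · -- last path row
      have hE : ∀ j : Fin n, E i j ↔ j.val = a - 1 := by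
        intro j; have hj := j.isLt; rw [hEdef]; unfold Bgen; omega
      have hdeg : outdeg E i = 1 := by
        unfold outdeg
        rw [Finset.card_filter]
        calc ∑ j : Fin n, (if E i j then 1 else 0)
            = ∑ j : Fin n, (if j.val = a - 1 then 1 else 0) := by
              refine Finset.sum_congr rfl fun j _ => if_congr (hE j) rfl rfl
          _ = ∑ k ∈ Finset.range n, (if k = a - 1 then 1 else 0) :=
              Fin.sum_univ_eq_sum_range (fun k => if k = a - 1 then 1 else 0) n
          _ = 1 := sum_ind_single_nat n (a - 1) (by omega)
      have hYT : Y (a - 1) = T := by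
        rcases Nat.eq_or_lt_of_le ha with h1 | h1
        · rw [hYval, if_pos (by omega), hT, if_pos h1.symm, hA₀def]
        · rw [hYval, if_neg (by omega), if_pos (by omega), hT, if_neg (by omega)]
      have hsum : ∑ j, (if E i j then y j else 0) = T := by
        calc ∑ j : Fin n, (if E i j then y j else 0)
            = ∑ j : Fin n, (if j.val = a - 1 then Y j.val else 0) := by
              refine Finset.sum_congr rfl fun j _ => if_congr (hE j) rfl rfl
          _ = ∑ k ∈ Finset.range n, (if k = a - 1 then Y k else 0) :=
              Fin.sum_univ_eq_sum_range (fun k => if k = a - 1 then Y k else 0) n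
          _ = ∑ k ∈ Finset.range n, (if k = a - 1 then T else 0) := by
              refine Finset.sum_congr rfl fun k _ => ?_
              by_cases hk : k = a - 1
              · rw [if_pos hk, if_pos hk, hk, hYT]
              · rw [if_neg hk, if_neg hk]
          _ = T := sum_ind_single n (a - 1) T (by omega)
      have hyi : y i = t ^ 1 * T := by
        rw [hydef]; simp only [hYval]
        rw [if_neg (by omega), if_neg (by omega), if_neg (by omega)]
        congr 2
        omega
      rw [hdeg, hsum, hyi]
      push_cast
      linear_combination (-(T)) * ht
  exact qIndex_eq_of_eigen (by omega) E y r (by linarith) hypos heig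

/-- characteristic residual function for `Bgen n a b 0 (a-1)` with path length `m` -/
noncomputable def phi (a b m : ℕ) (r : ℝ) : ℝ :=
  (r - b - 1) * ((r - a) - ((a : ℝ) - 1) * ((b : ℝ) / (r - b))) - b
    - ((r - 1)⁻¹) ^ m * (if a = 1 then (r - a) - ((a : ℝ) - 1) * ((b : ℝ) / (r - b))
        else (b : ℝ) / (r - b))

lemma phi_lo_neg (a b m : ℕ) (ha : 2 ≤ a) (hb : 1 ≤ b) :
    phi a b m ((a : ℝ) + b) < 0 := by
  have ha' : (2 : ℝ) ≤ (a : ℝ) := by exact_mod_cast ha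
  have hb' : (1 : ℝ) ≤ (b : ℝ) := by exact_mod_cast hb
  unfold phi
  rw [if_neg (by omega)]
  have hd0 : (0 : ℝ) < (a : ℝ) + b - 1 := by linarith
  set X : ℝ := (((a : ℝ) + b - 1)⁻¹) ^ m with hX
  have hX0 : 0 < X := pow_pos (inv_pos.2 hd0) m
  have ha0 : (0 : ℝ) < a := by linarith
  have key : ((a : ℝ) + b - b - 1) * (((a : ℝ) + b - a) - ((a : ℝ) - 1) * ((b : ℝ) / ((a : ℝ) + b - b)))
      - b - X * ((b : ℝ) / ((a : ℝ) + b - b)) = -((b : ℝ) / a) * (1 + X) := by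
    have ha0' : (a : ℝ) ≠ 0 := ne_of_gt ha0
    rw [add_sub_cancel_right]
    field_simp
    ring
  rw [key]
  have : (0 : ℝ) < (b : ℝ) / a := by positivity
  nlinarith

lemma hi1 (B X r : ℝ) (hB : 1 ≤ B) (hX0 : 0 < X) (hX1 : X ≤ 1) (hr : r = 1 + B + 2) :
    0 < (r - B - 1) * ((r - 1) - ((1 : ℝ) - 1) * (B / (r - B))) - B
      - X * ((r - 1) - ((1 : ℝ) - 1) * (B / (r - B))) := by
  subst hr
  have h0 : (0 : ℝ) < 1 + B + 2 - B := by linarith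
  have hsim : ((1 : ℝ) + B + 2 - B - 1) * ((1 + B + 2 - 1) - ((1 : ℝ) - 1) * (B / (1 + B + 2 - B)))
      - B - X * ((1 + B + 2 - 1) - ((1 : ℝ) - 1) * (B / (1 + B + 2 - B)))
      = 2 * (B + 2) - B - X * (B + 2) := by ring
  rw [hsim]
  nlinarith

lemma hi2 (A B X r : ℝ) (hA : 2 ≤ A) (hB : 1 ≤ B) (hX0 : 0 < X) (hX1 : X ≤ 1)
    (hr : r = A + B + 2) :
    0 < (r - B - 1) * ((r - A) - (A - 1) * (B / (r - B))) - B - X * (B / (r - B)) := by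
  subst hr
  have h0 : (0 : ℝ) < A + 2 := by linarith
  have h0' : A + B + 2 - B ≠ 0 := by intro h; nlinarith
  have hsim : (A + B + 2 - B - 1) * ((A + B + 2 - A) - (A - 1) * (B / (A + B + 2 - B))) - B
      - X * (B / (A + B + 2 - B))
      = ((A + 1) * (2 * A + 3 * B + 4) - B * (A + 2) - X * B) / (A + 2) := by
    field_simp
    ring
  rw [hsim]
  apply div_pos _ h0
  nlinarith

lemma phi_hi_pos (a b m : ℕ) (ha : 1 ≤ a) (hb : 1 ≤ b) :
    0 < phi a b m ((a : ℝ) + b + 2) := by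
  have ha' : (1 : ℝ) ≤ (a : ℝ) := by exact_mod_cast ha
  have hb' : (1 : ℝ) ≤ (b : ℝ) := by exact_mod_cast hb
  have hd0 : (0 : ℝ) < (a : ℝ) + b + 2 - 1 := by linarith
  have hX0 : 0 < (((a : ℝ) + b + 2 - 1)⁻¹) ^ m := pow_pos (inv_pos.2 hd0) m
  have hX1 : (((a : ℝ) + b + 2 - 1)⁻¹) ^ m ≤ 1 := by
    apply pow_le_one₀ (le_of_lt (inv_pos.2 hd0))
    rw [inv_le_one_iff₀]
    right; linarith
  unfold phi
  by_cases h1 : a = 1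
  · rw [if_pos h1]
    subst h1
    have := hi1 (b : ℝ) ((((1 : ℕ) : ℝ) + b + 2 - 1)⁻¹ ^ m) (((1 : ℕ) : ℝ) + b + 2)
      hb' (by push_cast at hX0 ⊢; convert hX0 using 3 <;> norm_num)
      (by push_cast at hX1 ⊢; convert hX1 using 3 <;> norm_num) (by push_cast; ring)
    convert this using 2 <;> norm_num
  · rw [if_neg h1]
    have ha2 : (2 : ℝ) ≤ (a : ℝ) := by
      have : 2 ≤ a := by omega
      exact_mod_cast this
    exact hi2 (a : ℝ) (b : ℝ) _ _ ha2 hb' hX0 hX1 rfl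

lemma core2 (P Q X r c d : ℝ) (hQ : 2 ≤ Q) (hPQ : Q + 1 ≤ P) (hr : P + Q < r) (hX0 : 0 < X)
    (hc : c * (r - Q) = Q) (hd : d * (r - P) = P)
    (hz : (r - Q - 1) * ((r - P) - (P - 1) * c) - Q - X * c = 0) :
    (r - P - 1) * ((r - Q) - (Q - 1) * d) - P - X * d < 0 := by
  have hrP : 0 < r - P := by linarith
  have hrQ : 0 < r - Q := by linarith
  have key : ((r - P - 1) * ((r - Q) - (Q - 1) * d) - P - X * d) * (r - P)
      = (P - Q) * (r * (P + Q - r) - 1 - X) := by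
    linear_combination (r - Q) * hz + ((r - Q - 1) * (P - 1) + X) * hc
      - ((r - P - 1) * (Q - 1) + X) * hd
  have hneg : (P - Q) * (r * (P + Q - r) - 1 - X) < 0 := by
    have h1 : 0 < P - Q := by linarith
    have h2 : r * (P + Q - r) - 1 - X < 0 := by nlinarith
    exact mul_neg_of_pos_of_neg h1 h2
  nlinarith [key, hneg, hrP]

lemma core1 (P X r c : ℝ) (hP : 2 ≤ P) (hr : P + 1 < r) (hX0 : 0 < X)
    (hc : c * (r - 1) = 1)
    (hz : (r - 1 - 1) * ((r - P) - (P - 1) * c) - 1 - X * c = 0) :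
    (r - P - 1) * (r - 1) - P - X * (r - 1) < 0 := by
  have hr1 : 0 < r - 1 := by linarith
  have hr3 : 0 < r - 3 := by linarith
  have hrP : 1 < r - P := by linarith
  have hF : (r - 2) * ((r - P) * (r - 1) - (P - 1)) - (r - 1) - X = 0 := by
    linear_combination (r - 1) * hz + ((r - 2) * (P - 1) + X) * hc
  have h1 : P < (r - 1) * (r - P) := by nlinarith
  have h2 : 0 ≤ (r - 3) * ((r - 1) * (r - P) - P) := by nlinarith
  nlinarith [hF, h2, hX0, hr3]

lemma phi_core (p q m : ℕ) (hq : 1 ≤ q) (hlt : q < p) (r : ℝ) (hr : (p : ℝ) + q < r)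
    (hz : phi p q m r = 0) : phi q p m r < 0 := by
  have hq' : (1 : ℝ) ≤ (q : ℝ) := by exact_mod_cast hq
  have hp' : (q : ℝ) + 1 ≤ (p : ℝ) := by exact_mod_cast hlt
  have hr1 : (0 : ℝ) < r - 1 := by linarith
  have hrq : (0 : ℝ) < r - q := by linarith
  have hrp : (0 : ℝ) < r - p := by linarith
  set X : ℝ := ((r - 1)⁻¹) ^ m with hX
  have hX0 : 0 < X := pow_pos (inv_pos.2 hr1) m
  unfold phi at hz ⊢
  rw [if_neg (by omega : ¬ p = 1)] at hz
  by_cases h1 : q = 1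
  · subst h1
    rw [if_pos rfl]
    push_cast at hz hr hrq hp' ⊢
    have hG : (r - (p:ℝ) - 1) * ((r - 1) - ((1:ℝ) - 1) * ((p:ℝ) / (r - p))) - p
        - X * ((r - 1) - ((1:ℝ) - 1) * ((p:ℝ) / (r - p)))
        = (r - (p:ℝ) - 1) * (r - 1) - p - X * (r - 1) := by ring
    rw [hG]
    have hc : ((1:ℝ) / (r - 1)) * (r - 1) = 1 := by
      field_simp
    apply core1 (p : ℝ) X r (1 / (r - 1)) (by linarith) (by linarith) hX0 hc
    convert hz using 3 <;> ring
  · rw [if_neg h1]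
    have hq2 : (2 : ℝ) ≤ (q : ℝ) := by
      have : 2 ≤ q := by omega
      exact_mod_cast this
    have hc : ((q : ℝ) / (r - q)) * (r - q) = q := div_mul_cancel₀ _ (ne_of_gt hrq)
    have hd : ((p : ℝ) / (r - p)) * (r - p) = p := div_mul_cancel₀ _ (ne_of_gt hrp)
    exact core2 (p : ℝ) (q : ℝ) X r _ _ hq2 hp' (by linarith) hX0 hc hd hz

lemma phi_contOn (a b m : ℕ) (lo hi : ℝ) (hlo1 : (b : ℝ) < lo) (hlo2 : (1 : ℝ) < lo) :
    ContinuousOn (phi a b m) (Set.Icc lo hi) := by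
  have h1 : ∀ r ∈ Set.Icc lo hi, r - (b : ℝ) ≠ 0 := by
    intro r hr
    have := hr.1
    intro h
    have : r = (b : ℝ) := by linarith [sub_eq_zero.1 h]
    linarith
  have h2 : ∀ r ∈ Set.Icc lo hi, r - 1 ≠ 0 := by
    intro r hr
    have := hr.1
    intro h
    have : r = (1 : ℝ) := by linarith [sub_eq_zero.1 h]
    linarith
  have hid : ContinuousOn (fun r : ℝ => r) (Set.Icc lo hi) := continuousOn_id
  have hsub : ContinuousOn (fun r : ℝ => r - (b : ℝ)) (Set.Icc lo hi) :=
    hid.sub continuousOn_const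
  have hc1 : ContinuousOn (fun r : ℝ => (b : ℝ) / (r - b)) (Set.Icc lo hi) :=
    ContinuousOn.div continuousOn_const hsub h1
  have hc2 : ContinuousOn (fun r : ℝ => ((r - 1)⁻¹) ^ m) (Set.Icc lo hi) :=
    (ContinuousOn.inv₀ (hid.sub continuousOn_const) h2).pow m
  have hc3 : ContinuousOn (fun r : ℝ => (r - (a : ℝ)) - ((a : ℝ) - 1) * ((b : ℝ) / (r - b)))
      (Set.Icc lo hi) := (hid.sub continuousOn_const).sub (continuousOn_const.mul hc1)
  have hc4 : ContinuousOn (fun r : ℝ => (r - (b : ℝ) - 1)) (Set.Icc lo hi) :=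
    (hid.sub continuousOn_const).sub continuousOn_const
  unfold phi
  by_cases ha1 : a = 1
  · simp only [if_pos ha1]
    exact ((hc4.mul hc3).sub continuousOn_const).sub (hc2.mul hc3)
  · simp only [if_neg ha1]
    exact ((hc4.mul hc3).sub continuousOn_const).sub (hc2.mul hc1)

lemma phi_exists_root (a b m : ℕ) (lo hi : ℝ) (hblo : (b : ℝ) < lo) (h1lo : (1 : ℝ) < lo)
    (hle : lo ≤ hi) (hneg : phi a b m lo < 0) (hpos : 0 < phi a b m hi) :
    ∃ r ∈ Set.Ioo lo hi, phi a b m r = 0 := by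
  have hcont := phi_contOn a b m lo hi hblo h1lo
  have hsub := intermediate_value_Ioo hle hcont
  have h0 : (0 : ℝ) ∈ Set.Ioo (phi a b m lo) (phi a b m hi) := ⟨hneg, hpos⟩
  obtain ⟨r, hr, hr0⟩ := hsub h0
  exact ⟨r, hr, hr0⟩


/-- For `p ≥ q ≥ 1` and `p + q ≤ n - 1`, `q(B¹_{n,p,q}) ≤ q(B²_{n,p,q})`, with equality if and
only if `p = q`. -/
theorem stmt13 (n p q : ℕ) (hq : 1 ≤ q) (hqp : q ≤ p) (hn : p + q + 1 ≤ n) :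
    qIndex (Bgen n p q 0 (p - 1)) ≤ qIndex (Bgen n p q p (p + q - 1)) ∧
      (qIndex (Bgen n p q 0 (p - 1)) = qIndex (Bgen n p q p (p + q - 1)) ↔ p = q) := by
  have hp : 1 ≤ p := le_trans hq hqp
  rcases eq_or_lt_of_le hqp with heq | hlt
  · subst heq
    have hB2 : qIndex (Bgen n q q q (q + q - 1)) = qIndex (Bgen n q q 0 (q - 1)) :=
      qIndex_B2_eq q q hp hq hn
    exact ⟨le_of_eq hB2.symm, ⟨fun _ => rfl, fun _ => hB2.symm⟩⟩
  · have hp2 : 2 ≤ p := by omega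
    have hq' : (1 : ℝ) ≤ (q : ℝ) := by exact_mod_cast hq
    have hp' : (1 : ℝ) ≤ (p : ℝ) := by exact_mod_cast hp
    have h1 := phi_lo_neg p q (n - p - q) hp2 hq
    have h2 := phi_hi_pos p q (n - p - q) hp hq
    obtain ⟨r₁, hr₁mem, hr₁0⟩ := phi_exists_root p q (n - p - q) ((p : ℝ) + q) ((p : ℝ) + q + 2)
      (by linarith) (by linarith) (by linarith) h1 h2
    have hr₁lo : (p : ℝ) + q < r₁ := hr₁mem.1
    have hQ1 : qIndex (Bgen n p q 0 (p - 1)) = r₁ :=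
      qIndex_B1_eq p q hp hq hn r₁ hr₁lo _ rfl (by unfold phi at hr₁0; exact hr₁0)
    have hcore : phi q p (n - p - q) r₁ < 0 := phi_core p q (n - p - q) hq hlt r₁ hr₁lo hr₁0
    have hhi2 : 0 < phi q p (n - p - q) ((q : ℝ) + p + 2) := phi_hi_pos q p (n - p - q) hq hp
    obtain ⟨r₂, hr₂mem, hr₂0⟩ := phi_exists_root q p (n - p - q) r₁ ((q : ℝ) + p + 2)
      (by linarith) (by linarith) (by linarith [hr₁mem.2]) hcore hhi2
    have hr₂lo : (q : ℝ) + p < r₂ := by linarith [hr₂mem.1]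
    have hQ2 : qIndex (Bgen n q p 0 (q - 1)) = r₂ :=
      qIndex_B1_eq q p hq hp (by omega) r₂ hr₂lo _ rfl (by
        unfold phi at hr₂0
        rw [show n - q - p = n - p - q from by omega]
        exact hr₂0)
    have hB2 : qIndex (Bgen n p q p (p + q - 1)) = qIndex (Bgen n q p 0 (q - 1)) :=
      qIndex_B2_eq p q hp hq hn
    have hlt12 : r₁ < r₂ := hr₂mem.1
    rw [hQ1, hB2, hQ2]
    exact ⟨le_of_lt hlt12, ⟨fun h => absurd h (ne_of_lt hlt12), fun h => absurd h (by omega)⟩⟩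
end
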